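/- arXiv:2112.09923 — 6 statements merged into one kernel-verified Lean document; each statement's English description precedes it below -/
import Mathlib

section
/- Let V be a finite-dimensional vector space over a field 𝕜, let e be a nilpotent endomorphism of V, and let H ⊆ V be a subspace of codimension 1 with e(H) ⊆ H. Then there exists a Jordan basis B for e and a vector v ∈ B such that H is the linear span of B \ {v}. -/
open Submodule Module

/-- A Jordan basis for a nilpotent endomorphism `e`: a basis `B` of `V` such that `e` maps
each basis vector either to another basis vector or to `0`, and no two distinct basis
vectors have the same nonzero image (so `B` decomposes into disjoint Jordan chains). -/
def IsJordanBasis {𝕜 V : Type*} [Field 𝕜] [AddCommGroup V] [Module 𝕜 V]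
    (e : V →ₗ[𝕜] V) (B : Set V) : Prop :=
  LinearIndependent 𝕜 (fun b : B => (b : V)) ∧
  Submodule.span 𝕜 B = ⊤ ∧
  (∀ b ∈ B, e b ∈ B ∨ e b = 0) ∧
  ∀ b ∈ B, ∀ b' ∈ B, b ≠ b' → e b ≠ 0 → e b' ≠ 0 → e b ≠ e b'

/-- Auxiliary induction: for every `e`-stable subspace `W` and every `u ∈ W`, there is a
"Jordan basis" `J` of `W` and `g ∈ W` such that `u - e g` is zero or a chain top of `J`. -/

lemma jb_aux {𝕜 V : Type*} [Field 𝕜] [AddCommGroup V] [Module 𝕜 V] [FiniteDimensional 𝕜 V]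
    (e : V →ₗ[𝕜] V) (henil : IsNilpotent e) :
    ∀ (n : ℕ) (W : Submodule 𝕜 V), Module.finrank 𝕜 W ≤ n → (∀ x ∈ W, e x ∈ W) → ∀ u ∈ W,
    ∃ (J : Set V) (g : V), g ∈ W ∧ J ⊆ (W : Set V) ∧
      (LinearIndependent 𝕜 (fun b : J => (b : V))) ∧ Submodule.span 𝕜 J = W ∧
      (∀ b ∈ J, e b ∈ J ∨ e b = 0) ∧
      (∀ b ∈ J, ∀ b' ∈ J, b ≠ b' → e b ≠ 0 → e b' ≠ 0 → e b ≠ e b') ∧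
      (u - e g = 0 ∨ (u - e g ∈ J ∧ ∀ b ∈ J, e b ≠ u - e g)) := by
  intro n
  induction n using Nat.strong_induction_on with
  | _ n ih =>
  intro W hrank hstab u hu
  by_cases hW : W = ⊥
  · refine ⟨∅, 0, W.zero_mem, by simp, linearIndependent_empty 𝕜 V, by simp [hW], by simp,
      by simp, ?_⟩
    left
    have : u = 0 := by simpa [hW] using hu
    simp [this]
  classical
  -- the image submodule
  set W' := W.map e with hW'def
  have hW'le : W' ≤ W := by
    rintro x ⟨y, hy, rfl⟩; exact hstab y hy
  have hW'stab : ∀ x ∈ W', e x ∈ W' := fun x hx => ⟨x, hW'le hx, rfl⟩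
  have hlt : W' < W := by
    refine lt_of_le_of_ne hW'le ?_
    intro hEq
    obtain ⟨N, hN⟩ := henil
    have hiter : ∀ k, Submodule.map (e ^ k) W = W := by
      intro k
      induction k with
      | zero => rw [pow_zero, Module.End.one_eq_id, Submodule.map_id]
      | succ k ihk =>
        rw [pow_succ, Module.End.mul_eq_comp, Submodule.map_comp, ← hW'def, hEq, ihk]
    have := hiter N
    rw [hN] at this
    simp only [Submodule.map_zero] at this
    exact hW (this.symm)
  have hfrlt : Module.finrank 𝕜 W' < n :=
    lt_of_lt_of_le (Submodule.finrank_lt_finrank_of_lt hlt) hrank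
  obtain ⟨J', g₁, hg₁, hJ'sub, hJ'ind, hJ'span, hJ'im, hJ'inj, hJ'top⟩ :=
    ih (Module.finrank 𝕜 W') hfrlt W' le_rfl hW'stab (e u) ⟨u, hu, rfl⟩
  -- preimage of g₁
  obtain ⟨g, hgW, hge⟩ : ∃ g, g ∈ W ∧ e g = g₁ := by
    rw [hW'def] at hg₁; exact Submodule.mem_map.mp hg₁
  set u' := u - e g with hu'def
  set t := e u - e g₁ with htdef
  have heu' : e u' = t := by rw [hu'def, map_sub, hge]
  have hu'W : u' ∈ W := W.sub_mem hu (hstab g hgW)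
  have h0J' : (0 : V) ∉ J' := fun h => hJ'ind.ne_zero ⟨0, h⟩ rfl
  -- tops
  set T := {b | b ∈ J' ∧ ∀ c ∈ J', e c ≠ b} with hTdef
  have hTsub : T ⊆ J' := fun b hb => hb.1
  have hJ'notT : ∀ c ∈ J', e c ∉ T := fun c hc hm => hm.2 c hc rfl
  -- lifts
  have hpre : ∀ b ∈ T, ∃ s, s ∈ W ∧ e s = b := by
    intro b hb
    have : b ∈ W' := hJ'sub (hTsub hb)
    rw [hW'def] at this
    obtain ⟨s, hs, hes⟩ := Submodule.mem_map.mp this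
    exact ⟨s, hs, hes⟩
  choose! ℓ₀ hℓ₀W hℓ₀e using hpre
  set ℓ := Function.update ℓ₀ t u' with hℓdef
  have hℓprop : ∀ b ∈ T, ℓ b ∈ W ∧ e (ℓ b) = b := by
    intro b hb
    by_cases hbt : b = t
    · subst hbt
      rw [hℓdef, Function.update_self]
      exact ⟨hu'W, by rw [heu']⟩
    · rw [hℓdef, Function.update_of_ne hbt]
      exact ⟨hℓ₀W b hb, hℓ₀e b hb⟩
  set S := ℓ '' T with hSdef
  have hSW : S ⊆ (W : Set V) := by rintro x ⟨b, hb, rfl⟩; exact (hℓprop b hb).1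
  -- independence of the family of lifts
  have hfamT : LinearIndependent 𝕜 (fun b : T => (b : V)) := LinearIndepOn.mono (show LinearIndepOn 𝕜 id J' from hJ'ind) hTsub
  have hfam : LinearIndependent 𝕜 (fun b : T => ℓ (b : V)) := by
    apply LinearIndependent.of_comp e
    have : (⇑e ∘ fun b : T => ℓ (b : V)) = fun b : T => (b : V) := by
      funext b; exact (hℓprop b b.2).2
    rw [this]; exact hfamT
  have hinjOn : Set.InjOn ℓ T := by
    intro a ha b hb hab
    have : e (ℓ a) = e (ℓ b) := by rw [hab]
    rwa [(hℓprop a ha).2, (hℓprop b hb).2] at this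
  have hSind : LinearIndependent 𝕜 (fun b : S => (b : V)) :=
    (linearIndepOn_iff_image hinjOn).mp hfam
  -- e kills span S only at 0
  have hSrange : S = Set.range (fun b : T => ℓ (b : V)) := by
    rw [hSdef, ← Set.image_eq_range]
  have hes_span : ∀ x ∈ span 𝕜 S, e x = 0 → x = 0 := by
    intro x hx hex
    rw [hSrange] at hx
    obtain ⟨c, hc⟩ := Finsupp.mem_span_range_iff_exists_finsupp.mp hx
    have hec : (c.sum fun i a => a • (i : V)) = 0 := by
      rw [← hex, ← hc, map_finsuppSum]
      congr 1
      funext i a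
      rw [map_smul, (hℓprop i i.2).2]
    have : c = 0 := by
      apply linearIndependent_iff.mp hfamT
      rwa [Finsupp.linearCombination_apply]
    rw [← hc, this, Finsupp.sum_zero_index]
  -- images of spans
  have himJ' : Submodule.map e (span 𝕜 J') ≤ span 𝕜 (J' \ T) := by
    rw [Submodule.map_span]
    apply span_le.mpr
    rintro x ⟨b, hb, rfl⟩
    rcases hJ'im b hb with h | h
    · exact subset_span ⟨h, hJ'notT b hb⟩
    · rw [h]; exact (span 𝕜 (J' \ T)).zero_mem
  have himS : Submodule.map e (span 𝕜 S) ≤ span 𝕜 T := by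
    rw [Submodule.map_span]
    apply span_le.mpr
    rintro x ⟨s, ⟨b, hb, rfl⟩, rfl⟩
    rw [(hℓprop b hb).2]
    exact subset_span hb
  have hTspan_disj : Disjoint (span 𝕜 T) (span 𝕜 (J' \ T)) := by
    have := hJ'ind.disjoint_span_image (s := {x : J' | (x : V) ∈ T})
      (t := {x : J' | (x : V) ∉ T}) (by simp [Set.disjoint_left])
    have h1 : (fun b : J' => (b : V)) '' {x : J' | (x : V) ∈ T} = T := by
      ext x
      constructor
      · rintro ⟨y, hy, rfl⟩; exact hy
      · intro hx; exact ⟨⟨x, hTsub hx⟩, hx, rfl⟩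
    have h2 : (fun b : J' => (b : V)) '' {x : J' | (x : V) ∉ T} = J' \ T := by
      ext x
      constructor
      · rintro ⟨y, hy, rfl⟩; exact ⟨y.2, hy⟩
      · rintro ⟨hx1, hx2⟩; exact ⟨⟨x, hx1⟩, hx2, rfl⟩
    rwa [h1, h2] at this
  -- disjointness of spans of J' and S
  have hdisj : Disjoint (span 𝕜 J') (span 𝕜 S) := by
    rw [Submodule.disjoint_def]
    intro x hxJ hxS
    have h1 : e x ∈ span 𝕜 (J' \ T) := himJ' ⟨x, hxJ, rfl⟩
    have h2 : e x ∈ span 𝕜 T := himS ⟨x, hxS, rfl⟩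
    exact hes_span x hxS (Submodule.disjoint_def.mp hTspan_disj _ h2 h1)
  have hUind : LinearIndependent 𝕜 (fun b : (J' ∪ S : Set V) => (b : V)) :=
    LinearIndepOn.id_union hJ'ind hSind hdisj
  -- span (J' ∪ S) ≤ W, and together with kernel it fills up W
  have hJ'W : J' ⊆ (W : Set V) := fun x hx => hW'le (hJ'sub hx)
  have hPle : span 𝕜 (J' ∪ S) ≤ W := by
    rw [span_le]; exact Set.union_subset hJ'W hSW
  have hWle_sup : W ≤ span 𝕜 (J' ∪ S) ⊔ (LinearMap.ker e ⊓ W) := by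
    intro x hx
    have hex : e x ∈ span 𝕜 J' := by
      rw [hJ'span, hW'def]; exact ⟨x, hx, rfl⟩
    have hJ'sub_im : span 𝕜 J' ≤ Submodule.map e (span 𝕜 (J' ∪ S)) := by
      apply span_le.mpr
      intro b hb
      by_cases hbT : b ∈ T
      · exact ⟨ℓ b, subset_span (Or.inr ⟨b, hbT, rfl⟩), (hℓprop b hbT).2⟩
      · have hbc : ∃ c ∈ J', e c = b := by
          by_contra hcon
          push_neg at hcon
          exact hbT ⟨hb, fun c hc => hcon c hc⟩
        obtain ⟨c, hc, hcb⟩ := hbc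
        exact ⟨c, subset_span (Or.inl hc), hcb⟩
    obtain ⟨p, hp, hep⟩ := hJ'sub_im hex
    refine Submodule.mem_sup.mpr ⟨p, hp, x - p, ⟨?_, W.sub_mem hx (hPle hp)⟩, by abel⟩
    simp only [SetLike.mem_coe, LinearMap.mem_ker, map_sub, hep, sub_self]
  -- the generic extension construction
  have hbuild : ∀ s₁ : Set V, LinearIndependent 𝕜 (fun b : s₁ => (b : V)) →
      J' ∪ S ⊆ s₁ → s₁ ⊆ (J' ∪ S) ∪ ((LinearMap.ker e ⊓ W : Submodule 𝕜 V) : Set V) →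
      ∃ J : Set V, s₁ ⊆ J ∧ J ⊆ (W : Set V) ∧
        (LinearIndependent 𝕜 (fun b : J => (b : V))) ∧ Submodule.span 𝕜 J = W ∧
        (∀ b ∈ J, e b ∈ J' ∨ e b = 0) ∧
        (∀ b ∈ J, e b ∈ J ∨ e b = 0) ∧
        (∀ b ∈ J, ∀ b' ∈ J, b ≠ b' → e b ≠ 0 → e b' ≠ 0 → e b ≠ e b') := by
    intro s₁ hs₁ind hs₁sup hs₁sub
    obtain ⟨J, hJt, hsJ, hspan0, hind⟩ := exists_linearIndepOn_id_extension hs₁ind hs₁sub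
    have htW : (J' ∪ S) ∪ ((LinearMap.ker e ⊓ W : Submodule 𝕜 V) : Set V) ⊆ (W : Set V) := by
      apply Set.union_subset (Set.union_subset hJ'W hSW)
      intro x hx
      exact hx.2
    have hJW : J ⊆ (W : Set V) := fun x hx => htW (hJt hx)
    have hspan : Submodule.span 𝕜 J = W := by
      apply le_antisymm (span_le.mpr hJW)
      calc W ≤ span 𝕜 (J' ∪ S) ⊔ (LinearMap.ker e ⊓ W) := hWle_sup
        _ = span 𝕜 (J' ∪ S) ⊔ span 𝕜 ((LinearMap.ker e ⊓ W : Submodule 𝕜 V) : Set V) := by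
            rw [Submodule.span_eq]
        _ = span 𝕜 ((J' ∪ S) ∪ ((LinearMap.ker e ⊓ W : Submodule 𝕜 V) : Set V)) :=
            (span_union _ _).symm
        _ ≤ span 𝕜 J := span_le.mpr hspan0
    have hJ'J : J' ⊆ J := fun x hx => hsJ (hs₁sup (Or.inl hx))
    have himJb : ∀ b ∈ J, e b ∈ J' ∨ e b = 0 := by
      intro b hb
      rcases hJt hb with hb' | hbN
      · rcases hb' with hbJ' | hbS
        · exact hJ'im b hbJ'
        · obtain ⟨c, hc, rfl⟩ := hbS
          exact Or.inl (by rw [(hℓprop c hc).2]; exact hTsub hc)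
      · exact Or.inr hbN.1
    have hmemJS : ∀ b ∈ J, e b ≠ 0 → b ∈ J' ∨ b ∈ S := by
      intro b hb hne
      rcases hJt hb with hb' | hbN
      · exact hb'
      · exact absurd hbN.1 hne
    refine ⟨J, hsJ, hJW, hind, hspan, himJb, ?_, ?_⟩
    · intro b hb
      rcases himJb b hb with h | h
      · exact Or.inl (hJ'J h)
      · exact Or.inr h
    · -- injectivity on nonzero images
      have key : ∀ b ∈ J, ∀ b' ∈ J, b ≠ b' → e b ≠ 0 → e b' ≠ 0 → e b = e b' → False := by
        intro b hb b' hb' hne heb heb' heq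
        rcases hmemJS b hb heb with hbJ' | hbS <;> rcases hmemJS b' hb' heb' with hb'J' | hb'S
        · exact hJ'inj b hbJ' b' hb'J' hne heb heb' heq
        · obtain ⟨c', hc', rfl⟩ := hb'S
          rw [(hℓprop c' hc').2] at heq
          exact hJ'notT b hbJ' (heq ▸ hc')
        · obtain ⟨c, hc, rfl⟩ := hbS
          rw [(hℓprop c hc).2] at heq
          exact hJ'notT b' hb'J' (heq ▸ hc)
        · obtain ⟨c, hc, rfl⟩ := hbS
          obtain ⟨c', hc', rfl⟩ := hb'S
          rw [(hℓprop c hc).2, (hℓprop c' hc').2] at heq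
          exact hne (heq ▸ rfl)
      exact fun b hb b' hb' hne heb heb' heq => key b hb b' hb' hne heb heb' heq
  -- now the case analysis
  rcases hJ'top with ht0 | ⟨htJ, htTop⟩
  · -- t = 0 : u' is in the kernel
    have heu'0 : e u' = 0 := by rw [heu', ht0]
    by_cases hu'sp : u' ∈ span 𝕜 J'
    · -- u' in the image: subtract once more
      have : u' ∈ W' := by rwa [← hJ'span]
      rw [hW'def] at this
      obtain ⟨z, hzW, hze⟩ := Submodule.mem_map.mp this
      obtain ⟨J, _, hJW, hind, hspan, _, him, hinj⟩ :=
        hbuild (J' ∪ S) hUind le_rfl Set.subset_union_left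
      refine ⟨J, g + z, W.add_mem hgW hzW, hJW, hind, hspan, him, hinj, Or.inl ?_⟩
      rw [map_add, hze]
      rw [hu'def]
      abel
    · -- u' not in span J': it becomes a new chain of length 1
      have hu'ne : u' ≠ 0 := fun h => hu'sp (h ▸ (span 𝕜 J').zero_mem)
      have hu'nP : u' ∉ span 𝕜 (J' ∪ S) := by
        intro h
        rw [span_union] at h
        obtain ⟨p, hp, q, hq, hpq⟩ := Submodule.mem_sup.mp h
        have heq : e p + e q = 0 := by
          rw [← map_add, hpq, heu'0]
        have hq0 : e q = 0 := by
          have h1 : e q ∈ span 𝕜 T := himS ⟨q, hq, rfl⟩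
          have h2 : e q ∈ span 𝕜 (J' \ T) := by
            have : e q = -(e p) := by rw [add_comm] at heq; exact eq_neg_of_add_eq_zero_left heq
            rw [this]
            exact neg_mem (himJ' ⟨p, hp, rfl⟩)
          exact Submodule.disjoint_def.mp hTspan_disj _ h1 h2
        have : q = 0 := hes_span q hq hq0
        rw [this, add_zero] at hpq
        exact hu'sp (hpq ▸ hp)
      have hins : LinearIndependent 𝕜 (fun b : (insert u' (J' ∪ S) : Set V) => (b : V)) :=
        LinearIndepOn.id_insert hUind hu'nP
      have hu'N : u' ∈ ((LinearMap.ker e ⊓ W : Submodule 𝕜 V) : Set V) := ⟨heu'0, hu'W⟩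
      obtain ⟨J, hsJ, hJW, hind, hspan, himJ', him, hinj⟩ :=
        hbuild (insert u' (J' ∪ S)) hins (Set.subset_insert _ _)
          (Set.insert_subset (Or.inr hu'N) Set.subset_union_left)
      refine ⟨J, g, hgW, hJW, hind, hspan, him, hinj, Or.inr ⟨hsJ (Set.mem_insert _ _), ?_⟩⟩
      intro b hb heq
      rcases himJ' b hb with h | h
      · exact hu'sp (by rw [hu'def, ← heq]; exact subset_span h)
      · exact hu'ne (heq.symm.trans h)
  · -- t ∈ J' is a top: u' = ℓ t extends the chain ending at t
    have htT : t ∈ T := ⟨htJ, htTop⟩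
    have hu'S : u' ∈ S := ⟨t, htT, by rw [hℓdef, Function.update_self]⟩
    obtain ⟨J, hsJ, hJW, hind, hspan, himJ', him, hinj⟩ :=
      hbuild (J' ∪ S) hUind le_rfl Set.subset_union_left
    have hu'ne : u' ≠ 0 := by
      intro h
      rw [h, map_zero] at heu'
      exact h0J' (by rwa [← heu'] at htJ)
    have hu'nsp : u' ∉ span 𝕜 J' := by
      intro h
      exact hu'ne (Submodule.disjoint_def.mp hdisj u' h (subset_span hu'S))
    refine ⟨J, g, hgW, hJW, hind, hspan, him, hinj, Or.inr ⟨hsJ (Or.inr hu'S), ?_⟩⟩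
    intro b hb heq
    rcases himJ' b hb with h | h
    · exact hu'nsp (by rw [hu'def, ← heq]; exact subset_span h)
    · exact hu'ne (heq.symm.trans h)

/-- If `e` is a nilpotent endomorphism of a finite-dimensional space `V` and
`H` is an `e`-stable subspace of codimension 1, then there is a Jordan basis `B` for `e` and
a vector `w ∈ B` such that `H` is the span of `B \ {w}`. -/
theorem exists_jordan_basis_adapted_to_hyperplane
    {𝕜 V : Type*} [Field 𝕜] [AddCommGroup V] [Module 𝕜 V] [FiniteDimensional 𝕜 V]
    (e : V →ₗ[𝕜] V) (henil : IsNilpotent e)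
    (H : Submodule 𝕜 V) (hcodim : Module.finrank 𝕜 ↥H + 1 = Module.finrank 𝕜 V)
    (hstab : ∀ x ∈ H, e x ∈ H) :
    ∃ (B : Set V) (w : V), IsJordanBasis e B ∧ w ∈ B ∧
      H = Submodule.span 𝕜 (B \ {w}) := by
  classical
  have hHne : H ≠ ⊤ := by
    intro h
    rw [h, finrank_top] at hcodim
    omega
  obtain ⟨v, hv⟩ : ∃ v, v ∉ H := by
    by_contra h
    push_neg at h
    exact hHne (Submodule.eq_top_iff'.mpr h)
  have hsup : ∀ x, x ∉ H → H ⊔ span 𝕜 {x} = ⊤ := by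
    intro x hx
    apply Submodule.eq_top_of_finrank_eq
    have h1 : H < H ⊔ span 𝕜 {x} := by
      refine lt_of_le_of_ne le_sup_left ?_
      intro hEq
      exact hx (hEq ▸ Submodule.mem_sup_right (Submodule.mem_span_singleton_self x))
    have h2 := Submodule.finrank_lt_finrank_of_lt h1
    have h3 := Submodule.finrank_le (H ⊔ span 𝕜 {x})
    omega
  -- the image of e is contained in H
  have hrange : ∀ x, e x ∈ H := by
    have hev : e v ∈ H := by
      have hv2 : e v ∈ H ⊔ span 𝕜 {v} := by rw [hsup v hv]; trivial
      obtain ⟨h₁, hh₁, z, hz, hsum⟩ := Submodule.mem_sup.mp hv2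
      obtain ⟨c, rfl⟩ := Submodule.mem_span_singleton.mp hz
      by_cases hc : c = 0
      · rw [hc, zero_smul, add_zero] at hsum
        exact hsum ▸ hh₁
      · exfalso
        obtain ⟨N, hN⟩ := henil
        have hiter : ∀ k, ∃ h ∈ H, (e ^ k) v = h + c ^ k • v := by
          intro k
          induction k with
          | zero => exact ⟨0, H.zero_mem, by simp⟩
          | succ k ihk =>
            obtain ⟨h, hh, hk⟩ := ihk
            refine ⟨e h + c ^ k • h₁, H.add_mem (hstab h hh) (H.smul_mem _ hh₁), ?_⟩
            rw [pow_succ', Module.End.mul_apply, hk, map_add, map_smul, ← hsum, smul_add,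
              smul_smul, ← pow_succ]
            abel
        obtain ⟨h, hh, hk⟩ := hiter N
        rw [hN] at hk
        simp only [LinearMap.zero_apply] at hk
        have hcv : c ^ N • v = -h := by linear_combination (norm := abel) -hk
        have : v ∈ H := by
          have hm : c ^ N • v ∈ H := hcv ▸ H.neg_mem hh
          have := H.smul_mem (c ^ N)⁻¹ hm
          rwa [smul_smul, inv_mul_cancel₀ (pow_ne_zero N hc), one_smul] at this
        exact hv this
    intro x
    have hx2 : x ∈ H ⊔ span 𝕜 {v} := by rw [hsup v hv]; trivial
    obtain ⟨h₁, hh₁, z, hz, hsum⟩ := Submodule.mem_sup.mp hx2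
    obtain ⟨c, rfl⟩ := Submodule.mem_span_singleton.mp hz
    rw [← hsum, map_add, map_smul]
    exact H.add_mem (hstab _ hh₁) (H.smul_mem _ hev)
  -- apply the main construction to H and e v
  obtain ⟨J, g, hgH, hJsub, hJind, hJspan, hJim, hJinj, htop⟩ :=
    jb_aux e henil (Module.finrank 𝕜 H) H le_rfl hstab (e v) (hrange v)
  set v' := v - g with hv'def
  have hv'H : v' ∉ H := by
    intro h
    apply hv
    have : v = v' + g := by rw [hv'def]; abel
    rw [this]
    exact H.add_mem h hgH
  have hev' : e v' = e v - e g := by rw [hv'def, map_sub]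
  have hv'nJ : v' ∉ J := fun h => hv'H (hJsub h)
  refine ⟨insert v' J, v', ⟨?_, ?_, ?_, ?_⟩, Set.mem_insert _ _, ?_⟩
  · exact LinearIndepOn.id_insert hJind (by rw [hJspan]; exact hv'H)
  · rw [Submodule.span_insert, hJspan, sup_comm]
    exact hsup v' hv'H
  · intro b hb
    rcases Set.mem_insert_iff.mp hb with rfl | hbJ
    · rcases htop with h0 | ⟨hmem, _⟩
      · exact Or.inr (hev'.trans h0)
      · exact Or.inl (Set.mem_insert_of_mem _ (hev' ▸ hmem))
    · rcases hJim b hbJ with h | h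
      · exact Or.inl (Set.mem_insert_of_mem _ h)
      · exact Or.inr h
  · intro b hb b' hb' hne heb heb'
    rcases Set.mem_insert_iff.mp hb with rfl | hbJ <;>
      rcases Set.mem_insert_iff.mp hb' with rfl | hb'J
    · exact absurd rfl hne
    · rcases htop with h0 | ⟨_, htop'⟩
      · exact absurd (hev'.trans h0) heb
      · intro heq
        exact htop' b' hb'J (heq.symm.trans hev')
    · rcases htop with h0 | ⟨_, htop'⟩
      · exact absurd (hev'.trans h0) heb'
      · intro heq
        exact htop' b hbJ (heq.trans hev')
    · exact hJinj b hbJ b' hb'J hne heb heb'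
  · rw [Set.insert_diff_self_of_notMem hv'nJ, hJspan]
end

section
/- Let e = e_0 + e_1 on the vector space V with basis {v_{i,j,k} : (i,j,k) ∈ 𝕀} be the explicit representative described in the context. Then for every p ≥ 0, dim ker(e^p) = Σ_{j=1}^{m} min(p, μ^Σ_j), where m = max_i m_i and μ^Σ_j = Σ_{i=1}^n μ_{i,j}; that is, e is nilpotent of Jordan type μ^Σ. -/
/-- A list of naturals is a partition: non-increasing with positive parts. -/
def IsPartitionL (μ : List ℕ) : Prop :=
  μ.Pairwise (· ≥ ·) ∧ ∀ x ∈ μ, 0 < x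

/-- A standard tableau of shape `μ` (a partition of `μ.sum`), given as a function on
0-indexed boxes `(r, c)` with `r < μ.length` and `c < μ.getD r 0`: the entries are exactly
`{1, ..., μ.sum}` each occurring once, strictly increasing along rows and down columns. -/
structure IsStdTableau (μ : List ℕ) (T : ℕ → ℕ → ℕ) : Prop where
  entry_mem : ∀ r c, r < μ.length → c < μ.getD r 0 → 1 ≤ T r c ∧ T r c ≤ μ.sum
  exists_box : ∀ a, 1 ≤ a → a ≤ μ.sum → ∃ r c, r < μ.length ∧ c < μ.getD r 0 ∧ T r c = a
  inj : ∀ r c r' c', r < μ.length → c < μ.getD r 0 → r' < μ.length → c' < μ.getD r' 0 →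
      T r c = T r' c' → r = r' ∧ c = c'
  row_lt : ∀ r c c', r < μ.length → c < c' → c' < μ.getD r 0 → T r c < T r c'
  col_lt : ∀ r r' c, r < r' → r' < μ.length → c < μ.getD r' 0 → T r c < T r' c

/-- `shift μ k = λ_0 + ... + λ_{k-1}` where `λ_l = (μ l).sum`. -/
def shift (μ : ℕ → List ℕ) (k : ℕ) : ℕ := ∑ l ∈ Finset.range k, (μ l).sum

/-- The maximal number of parts among `μ 0, ..., μ (n-1)`. -/
def maxLen (n : ℕ) (μ : ℕ → List ℕ) : ℕ := (Finset.range n).sup fun k => (μ k).length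

/-- The pointwise sum partition `μ^Σ`, with `j`-th part `Σ_{i<n} μ_{i,j}`. -/
def sumShape (n : ℕ) (μ : ℕ → List ℕ) : List ℕ :=
  List.ofFn fun r : Fin (maxLen n μ) => ∑ k ∈ Finset.range n, (μ k).getD (r : ℕ) 0

/-- Row `r` of the stacked filling: the concatenation over `k = 0, ..., n-1` of row `r`
of `T k`, with every entry of the `k`-th row increased by `λ_0 + ... + λ_{k-1}`. -/
def stkRow (n : ℕ) (μ : ℕ → List ℕ) (T : ℕ → ℕ → ℕ → ℕ) (r : ℕ) : List ℕ :=
  ((List.range n).map fun k =>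
    (List.range ((μ k).getD r 0)).map fun c => T k r c + shift μ k).flatten

/-- The entry of the stacked filling `stk (T 0, ..., T (n-1))` in box `(r, c)`. -/
def stkEntry (n : ℕ) (μ : ℕ → List ℕ) (T : ℕ → ℕ → ℕ → ℕ) (r c : ℕ) : ℕ :=
  (stkRow n μ T r).getD c 0

/-- The index set `𝕀`: 0-indexed triples `(i, j, k)` with `i < n`, `j` a row index of the
partition `μ i`, and `k < μ_{i,j}`. -/
def InIdx (n : ℕ) (μ : ℕ → List ℕ) (x : ℕ × ℕ × ℕ) : Prop :=
  x.1 < n ∧ x.2.1 < (μ x.1).length ∧ x.2.2 < (μ x.1).getD x.2.1 0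

/-- The explicit representative: `v` restricted to `𝕀` is a basis of `V`, `e0` shifts each
basis vector one step down its own Jordan chain (within its Young diagram), and `e1` sends
the first vector `v (i,j,0)` of a chain to the last vector `v (i', j, μ_{i',j} - 1)` of the
chain in the same row `j` of the previous diagram `i' < i` having a nonzero `j`-th part
(and to `0` if no such `i'` exists); `e1` kills all other basis vectors. -/
structure IsRep {𝕜 V : Type*} [Field 𝕜] [AddCommGroup V] [Module 𝕜 V]
    (n : ℕ) (μ : ℕ → List ℕ) (v : ℕ × ℕ × ℕ → V) (e0 e1 : V →ₗ[𝕜] V) : Prop where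
  indep : LinearIndependent 𝕜 (fun x : {x : ℕ × ℕ × ℕ // InIdx n μ x} => v x)
  spans : Submodule.span 𝕜 (v '' {x | InIdx n μ x}) = ⊤
  e0_bot : ∀ i j, InIdx n μ (i, j, 0) → e0 (v (i, j, 0)) = 0
  e0_succ : ∀ i j k, InIdx n μ (i, j, k + 1) → e0 (v (i, j, k + 1)) = v (i, j, k)
  e1_pos : ∀ i j k, InIdx n μ (i, j, k + 1) → e1 (v (i, j, k + 1)) = 0
  e1_link : ∀ i i' j, InIdx n μ (i, j, 0) → i' < i → 0 < (μ i').getD j 0 →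
      (∀ i'', i' < i'' → i'' < i → (μ i'').getD j 0 = 0) →
      e1 (v (i, j, 0)) = v (i', j, (μ i').getD j 0 - 1)
  e1_none : ∀ i j, InIdx n μ (i, j, 0) → (∀ i' < i, (μ i').getD j 0 = 0) →
      e1 (v (i, j, 0)) = 0

namespace RepJT

def psum (μ : ℕ → List ℕ) (j i : ℕ) : ℕ := ∑ k ∈ Finset.range i, (μ k).getD j 0

lemma psum_mono (μ : ℕ → List ℕ) (j : ℕ) : Monotone (psum μ j) := fun _ _ h =>
  Finset.sum_le_sum_of_subset (Finset.range_subset_range.2 h)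

lemma psum_succ (μ : ℕ → List ℕ) (j i : ℕ) :
    psum μ j (i + 1) = psum μ j i + (μ i).getD j 0 := Finset.sum_range_succ _ _

def pick (n : ℕ) (μ : ℕ → List ℕ) (j t : ℕ) : ℕ :=
  Nat.findGreatest (fun i => psum μ j i ≤ t) n

lemma pick_le (n : ℕ) (μ : ℕ → List ℕ) (j t : ℕ) : psum μ j (pick n μ j t) ≤ t :=
  Nat.findGreatest_spec (P := fun i => psum μ j i ≤ t) (Nat.zero_le n) (by simp [psum])

lemma pick_lt (n : ℕ) (μ : ℕ → List ℕ) {j t : ℕ} (ht : t < psum μ j n) : pick n μ j t < n :=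
  lt_of_le_of_ne (Nat.findGreatest_le n) (fun h => by
    have := pick_le n μ j t; rw [h] at this; omega)

lemma lt_pick_succ (n : ℕ) (μ : ℕ → List ℕ) {j t : ℕ} (ht : t < psum μ j n) :
    t < psum μ j (pick n μ j t + 1) := by
  by_contra h
  push_neg at h
  exact Nat.findGreatest_is_greatest (Nat.lt_succ_self _) (Nat.succ_le_of_lt (pick_lt n μ ht)) h

lemma pick_eq (n : ℕ) (μ : ℕ → List ℕ) {i j t : ℕ} (hi : i < n)
    (h1 : psum μ j i ≤ t) (h2 : t < psum μ j (i + 1)) : pick n μ j t = i := by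
  apply le_antisymm
  · by_contra h
    push_neg at h
    have h3 : psum μ j (i + 1) ≤ psum μ j (pick n μ j t) := psum_mono μ j h
    have h4 := pick_le n μ j t
    omega
  · by_contra h
    push_neg at h
    exact Nat.findGreatest_is_greatest h (le_of_lt hi) h1

lemma InIdx_pick (n : ℕ) (μ : ℕ → List ℕ) {j t : ℕ} (ht : t < psum μ j n) :
    InIdx n μ (pick n μ j t, j, t - psum μ j (pick n μ j t)) := by
  have h1 := pick_le n μ j t
  have h2 := lt_pick_succ n μ ht
  rw [psum_succ] at h2
  have hpos : 0 < (μ (pick n μ j t)).getD j 0 := by omega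
  refine ⟨pick_lt n μ ht, ?_, ?_⟩
  · by_contra h
    push_neg at h
    rw [List.getD_eq_default _ _ h] at hpos
    omega
  · show t - psum μ j (pick n μ j t) < (μ (pick n μ j t)).getD j 0
    omega

lemma pick_add (n : ℕ) (μ : ℕ → List ℕ) {i j k : ℕ} (hi : i < n)
    (hk : k < (μ i).getD j 0) : pick n μ j (psum μ j i + k) = i :=
  pick_eq n μ hi (Nat.le_add_right _ _) (by rw [psum_succ]; omega)

end RepJT

/-- The explicit representative `e = e0 + e1` is nilpotent of Jordan type
`μ^Σ`: for every `p ≥ 0`, `dim ker(e^p) = Σ_j min(p, μ^Σ_j)`. -/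
theorem representative_jordan_type
    {𝕜 V : Type*} [Field 𝕜] [AddCommGroup V] [Module 𝕜 V]
    (n : ℕ) (μ : ℕ → List ℕ)
    (hpart : ∀ i < n, IsPartitionL (μ i)) (hcomp : ∀ i < n, 0 < (μ i).sum)
    (v : ℕ × ℕ × ℕ → V) (e0 e1 : V →ₗ[𝕜] V) (hrep : IsRep n μ v e0 e1) :
    IsNilpotent (e0 + e1) ∧
    ∀ p : ℕ, Module.finrank 𝕜 ↥(LinearMap.ker ((e0 + e1) ^ p)) =
      ∑ j ∈ Finset.range (sumShape n μ).length, min p ((sumShape n μ).getD j 0) := by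
  classical
  obtain ⟨hindep, hspans, e0_bot, e0_succ, e1_pos, e1_link, e1_none⟩ := hrep
  set m := maxLen n μ with hmdef
  set Sf : Fin m → ℕ := fun j => RepJT.psum μ j n with hSf
  let ι : ((j : Fin m) × Fin (Sf j)) → {x : ℕ × ℕ × ℕ // InIdx n μ x} :=
    fun s => ⟨(RepJT.pick n μ s.1 s.2, s.1, s.2 - RepJT.psum μ s.1 (RepJT.pick n μ s.1 s.2)),
      RepJT.InIdx_pick n μ s.2.isLt⟩
  have hιinj : Function.Injective ι := by
    rintro ⟨j, t⟩ ⟨j', t'⟩ h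
    simp only [ι, Subtype.mk_eq_mk, Prod.mk.injEq] at h
    obtain ⟨h1, h2, h3⟩ := h
    have hj : j = j' := Fin.ext h2
    subst hj
    have a1 := RepJT.pick_le n μ j t
    have a2 := RepJT.pick_le n μ j t'
    rw [h1] at h3 a1
    have ht : (t : ℕ) = t' := by omega
    cases Fin.ext ht
    rfl
  let b : ((j : Fin m) × Fin (Sf j)) → V := fun s => v (ι s)
  have hbindep : LinearIndependent 𝕜 b := hindep.comp ι hιinj
  have hmem : ∀ x, InIdx n μ x → v x ∈ Set.range b := by
    rintro ⟨i, j, k⟩ hx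
    have hj : j < m := by
      have h := Finset.le_sup (f := fun k => (μ k).length) (Finset.mem_range.2 hx.1)
      rw [hmdef]
      unfold maxLen
      exact lt_of_lt_of_le hx.2.1 h
    have ht : RepJT.psum μ j i + k < Sf ⟨j, hj⟩ := by
      have h1 : RepJT.psum μ j i + k < RepJT.psum μ j (i + 1) := by
        rw [RepJT.psum_succ]
        exact Nat.add_lt_add_left hx.2.2 _
      exact lt_of_lt_of_le h1 (RepJT.psum_mono μ j hx.1)
    refine ⟨⟨⟨j, hj⟩, ⟨RepJT.psum μ j i + k, ht⟩⟩, ?_⟩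
    show v (RepJT.pick n μ j (RepJT.psum μ j i + k), j,
      RepJT.psum μ j i + k - RepJT.psum μ j (RepJT.pick n μ j (RepJT.psum μ j i + k))) = v (i, j, k)
    rw [RepJT.pick_add n μ hx.1 hx.2.2, Nat.add_sub_cancel_left]
  have hbspan : ⊤ ≤ Submodule.span 𝕜 (Set.range b) := by
    rw [← hspans]
    refine Submodule.span_le.2 ?_
    rintro _ ⟨x, hx, rfl⟩
    exact Submodule.subset_span (hmem x hx)
  let B : Module.Basis ((j : Fin m) × Fin (Sf j)) 𝕜 V := Module.Basis.mk hbindep hbspan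
  let bb : Fin m → ℕ → V := fun j t => if h : t < Sf j then b ⟨j, ⟨t, h⟩⟩ else 0
  -- action of e on the bottom of each chain
  have hzero : ∀ (j : Fin m), 0 < Sf j → (e0 + e1) (bb j 0) = 0 := by
    intro j hj
    have hps : RepJT.psum μ (j : ℕ) (RepJT.pick n μ (j : ℕ) 0) = 0 :=
      Nat.le_zero.mp (RepJT.pick_le n μ j 0)
    have hIn : InIdx n μ (RepJT.pick n μ (j : ℕ) 0, (j : ℕ), 0) := by
      have := RepJT.InIdx_pick n μ (j := (j : ℕ)) (t := 0) hj
      rwa [hps, Nat.sub_zero] at this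
    have hval : bb j 0 = v (RepJT.pick n μ (j : ℕ) 0, (j : ℕ), 0) := by
      show (if h : 0 < Sf j then b ⟨j, ⟨0, h⟩⟩ else 0) = _
      rw [dif_pos hj]
      show v (RepJT.pick n μ (j : ℕ) 0, (j : ℕ),
        0 - RepJT.psum μ (j : ℕ) (RepJT.pick n μ (j : ℕ) 0)) = _
      rw [hps]
    rw [hval, LinearMap.add_apply, e0_bot _ _ hIn, e1_none _ _ hIn ?_, add_zero]
    intro i' hi'
    exact (Finset.sum_eq_zero_iff).mp hps i' (Finset.mem_range.2 hi')
  -- action of e one step up each chain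
  have hsucc : ∀ (j : Fin m) (s : ℕ), s + 1 < Sf j → (e0 + e1) (bb j (s + 1)) = bb j s := by
    intro j s hs1
    have hs : s < Sf j := Nat.lt_of_succ_lt hs1
    set i' := RepJT.pick n μ (j : ℕ) (s + 1) with hi'
    set i := RepJT.pick n μ (j : ℕ) s with hi
    have hIn' : InIdx n μ (i', (j : ℕ), s + 1 - RepJT.psum μ (j : ℕ) i') :=
      RepJT.InIdx_pick n μ hs1
    have hle' : RepJT.psum μ (j : ℕ) i' ≤ s + 1 := RepJT.pick_le n μ j (s + 1)
    have hlt' : s + 1 < RepJT.psum μ (j : ℕ) (i' + 1) := RepJT.lt_pick_succ n μ hs1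
    have hlei : RepJT.psum μ (j : ℕ) i ≤ s := RepJT.pick_le n μ j s
    have hlti : s < RepJT.psum μ (j : ℕ) (i + 1) := RepJT.lt_pick_succ n μ hs
    have hb1 : bb j (s + 1) = v (i', (j : ℕ), s + 1 - RepJT.psum μ (j : ℕ) i') := by
      show (if h : s + 1 < Sf j then b ⟨j, ⟨s + 1, h⟩⟩ else 0) = _
      rw [dif_pos hs1]
    have hb0 : bb j s = v (i, (j : ℕ), s - RepJT.psum μ (j : ℕ) i) := by
      show (if h : s < Sf j then b ⟨j, ⟨s, h⟩⟩ else 0) = _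
      rw [dif_pos hs]
    rw [hb1, hb0, LinearMap.add_apply]
    by_cases hcase : RepJT.psum μ (j : ℕ) i' ≤ s
    · have hii : i = i' := by
        rw [hi]
        exact RepJT.pick_eq n μ (RepJT.pick_lt n μ hs1) hcase
          (lt_trans (Nat.lt_succ_self s) hlt')
      have hk : s + 1 - RepJT.psum μ (j : ℕ) i' = (s - RepJT.psum μ (j : ℕ) i') + 1 := by omega
      have hIn2 : InIdx n μ (i', (j : ℕ), (s - RepJT.psum μ (j : ℕ) i') + 1) := by
        rwa [hk] at hIn'
      rw [hk, e0_succ _ _ _ hIn2, e1_pos _ _ _ hIn2, add_zero, hii]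
    · push_neg at hcase
      have hpe : RepJT.psum μ (j : ℕ) i' = s + 1 := le_antisymm hle' hcase
      have hii' : i < i' := by
        by_contra h
        push_neg at h
        have := RepJT.psum_mono μ (j : ℕ) h
        omega
      have hpi1 : RepJT.psum μ (j : ℕ) (i + 1) = s + 1 := by
        have h1 : RepJT.psum μ (j : ℕ) (i + 1) ≤ RepJT.psum μ (j : ℕ) i' :=
          RepJT.psum_mono μ (j : ℕ) hii'
        omega
      have hps := RepJT.psum_succ μ (j : ℕ) i
      have hpos : 0 < (μ i).getD (j : ℕ) 0 := by omega
      have hmid : ∀ i'', i < i'' → i'' < i' → (μ i'').getD (j : ℕ) 0 = 0 := by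
        intro i'' ha hb
        have a1 : RepJT.psum μ (j : ℕ) (i + 1) ≤ RepJT.psum μ (j : ℕ) i'' :=
          RepJT.psum_mono μ (j : ℕ) ha
        have a2 : RepJT.psum μ (j : ℕ) (i'' + 1) ≤ RepJT.psum μ (j : ℕ) i' :=
          RepJT.psum_mono μ (j : ℕ) hb
        have a3 := RepJT.psum_succ μ (j : ℕ) i''
        omega
      have hk0 : s + 1 - RepJT.psum μ (j : ℕ) i' = 0 := by omega
      have hIn2 : InIdx n μ (i', (j : ℕ), 0) := by rwa [hk0] at hIn'
      have hkv : s - RepJT.psum μ (j : ℕ) i = (μ i).getD (j : ℕ) 0 - 1 := by omega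
      rw [hk0, e0_bot _ _ hIn2, e1_link i' i (j : ℕ) hIn2 hii' hpos hmid, zero_add, hkv]
  -- powers of e
  have hpow : ∀ (p : ℕ) (j : Fin m) (t : ℕ), t < Sf j →
      ((e0 + e1) ^ p) (bb j t) = if p ≤ t then bb j (t - p) else 0 := by
    intro p
    induction p with
    | zero => intro j t ht; simp
    | succ p ih =>
      intro j t ht
      rw [pow_succ', Module.End.mul_apply, ih j t ht]
      by_cases hp : p ≤ t
      · rw [if_pos hp]
        rcases Nat.eq_or_lt_of_le hp with heq | hlt
        · have h0 : t - p = 0 := by omega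
          rw [h0, if_neg (by omega)]
          exact hzero j (by omega)
        · have hk : t - p = (t - (p + 1)) + 1 := by omega
          rw [hk, if_pos (by omega)]
          exact hsucc j _ (by omega)
      · rw [if_neg hp, map_zero, if_neg (by omega)]
  have hBb : ∀ s : (j : Fin m) × Fin (Sf j), B s = bb s.1 s.2 := by
    rintro ⟨j, t⟩
    rw [Module.Basis.mk_apply]
    show b ⟨j, t⟩ = if h : (t : ℕ) < Sf j then b ⟨j, ⟨(t : ℕ), h⟩⟩ else 0
    rw [dif_pos t.isLt]
  -- nilpotency
  have hnil : IsNilpotent (e0 + e1) := by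
    refine ⟨Finset.univ.sup Sf + 1, B.ext fun s => ?_⟩
    rw [hBb s, hpow _ s.1 s.2 s.2.isLt, if_neg, LinearMap.zero_apply]
    have : Sf s.1 ≤ Finset.univ.sup Sf := Finset.le_sup (Finset.mem_univ s.1)
    omega
  refine ⟨hnil, fun p => ?_⟩
  have : Module.Finite 𝕜 V := Module.Finite.of_basis B
  have hV : Module.finrank 𝕜 V = ∑ j : Fin m, Sf j := by
    rw [Module.finrank_eq_card_basis B]
    simp
  let g : ((j : Fin m) × Fin (Sf j - p)) → V :=
    fun s => b ⟨s.1, ⟨s.2, lt_of_lt_of_le s.2.isLt (Nat.sub_le _ _)⟩⟩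
  have hginj : Function.Injective (fun s : ((j : Fin m) × Fin (Sf j - p)) =>
      (⟨s.1, ⟨s.2, lt_of_lt_of_le s.2.isLt (Nat.sub_le _ _)⟩⟩ : (j : Fin m) × Fin (Sf j))) := by
    rintro ⟨j, t⟩ ⟨j', t'⟩ h
    have h1 : j = j' := congrArg Sigma.fst h
    subst h1
    have h2 := sigma_mk_injective h
    rw [Fin.mk.injEq] at h2
    have h3 : (t : ℕ) = (t' : ℕ) := h2
    cases Fin.ext h3
    rfl
  have hgind : LinearIndependent 𝕜 g := hbindep.comp _ hginj
  have hrange : LinearMap.range ((e0 + e1) ^ p) = Submodule.span 𝕜 (Set.range g) := by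
    rw [LinearMap.range_eq_map, ← B.span_eq, Submodule.map_span, ← Set.range_comp]
    apply le_antisymm
    · refine Submodule.span_le.2 ?_
      rintro _ ⟨⟨j, t⟩, rfl⟩
      simp only [Function.comp_apply]
      rw [hBb ⟨j, t⟩, hpow p j t t.isLt]
      by_cases hp : p ≤ (t : ℕ)
      · rw [if_pos hp]
        apply Submodule.subset_span
        have hlt : (t : ℕ) - p < Sf j - p := by have := t.isLt; omega
        refine ⟨⟨j, ⟨(t : ℕ) - p, hlt⟩⟩, ?_⟩
        show b ⟨j, ⟨(t : ℕ) - p, lt_of_lt_of_le hlt (Nat.sub_le _ _)⟩⟩ =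
          if h : (t : ℕ) - p < Sf j then b ⟨j, ⟨(t : ℕ) - p, h⟩⟩ else 0
        rw [dif_pos (lt_of_lt_of_le hlt (Nat.sub_le _ _))]
      · rw [if_neg hp]
        exact Submodule.zero_mem _
    · refine Submodule.span_le.2 ?_
      rintro _ ⟨⟨j, t⟩, rfl⟩
      apply Submodule.subset_span
      have h2 : (t : ℕ) + p < Sf j := by have := t.isLt; omega
      refine ⟨⟨j, ⟨(t : ℕ) + p, h2⟩⟩, ?_⟩
      simp only [Function.comp_apply]
      rw [hBb ⟨j, ⟨(t : ℕ) + p, h2⟩⟩, hpow p j _ h2, if_pos (by omega)]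
      have h3 : (t : ℕ) + p - p = (t : ℕ) := by omega
      rw [h3]
      have hlt2 : (t : ℕ) < Sf j := lt_of_lt_of_le t.isLt (Nat.sub_le _ _)
      show (if h : (t : ℕ) < Sf j then b ⟨j, ⟨(t : ℕ), h⟩⟩ else 0) =
        b ⟨j, ⟨(t : ℕ), hlt2⟩⟩
      rw [dif_pos hlt2]
  have hrk : Module.finrank 𝕜 (LinearMap.range ((e0 + e1) ^ p)) = ∑ j : Fin m, (Sf j - p) := by
    rw [hrange, finrank_span_eq_card hgind]
    simp
  have hrn := LinearMap.finrank_range_add_finrank_ker ((e0 + e1) ^ p)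
  have hR : ∑ j ∈ Finset.range (sumShape n μ).length, min p ((sumShape n μ).getD j 0)
      = ∑ j : Fin m, min p (Sf j) := by
    rw [sumShape, List.length_ofFn, Finset.sum_range]
    refine Finset.sum_congr rfl fun j _ => ?_
    congr 1
    rw [List.getD_eq_getElem _ _ (by simp), List.getElem_ofFn]
    rfl
  have hsum : ∑ j : Fin m, Sf j = (∑ j : Fin m, (Sf j - p)) + ∑ j : Fin m, min p (Sf j) := by
    rw [← Finset.sum_add_distrib]
    exact Finset.sum_congr rfl fun j _ => by omega
  rw [hR]
  omega
end

section
/- Let e = e_0 + e_1 on the vector space V with basis {v_{i,j,k} : (i,j,k) ∈ 𝕀} be the explicit representative described in the context. Then for every p ≥ 0, ker(e^p) is exactly the linear span of the basis vectors v_{i,j,k} satisfying k + Σ_{i' < i} μ_{i',j} ≤ p (where μ_{i',j} = 0 for j > m_{i'}); i.e. ker(e^p) is spanned by the boxes lying in the first p columns of the stacked Young diagram. -/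
namespace StmtAux

variable {𝕜 V : Type*} [Field 𝕜] [AddCommGroup V] [Module 𝕜 V]

/-- depth of a box: 0-indexed column in the stacked diagram -/
def dIdx (μ : ℕ → List ℕ) (x : ℕ × ℕ × ℕ) : ℕ :=
  x.2.2 + ∑ i' ∈ Finset.range x.1, (μ i').getD x.2.1 0

lemma lt_length_of_getD_pos {μ : List ℕ} {j : ℕ} (h : 0 < μ.getD j 0) : j < μ.length := by
  by_contra hj
  rw [List.getD_eq_default _ _ (le_of_not_gt hj)] at h
  exact lt_irrefl 0 h

lemma mono_lemma (μ : ℕ → List ℕ) {i1 j k1 i2 k2 : ℕ}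
    (h1 : k1 < (μ i1).getD j 0) (hi : i1 < i2) :
    dIdx μ (i1, j, k1) < dIdx μ (i2, j, k2) := by
  have hs : ∑ i' ∈ Finset.range (i1 + 1), (μ i').getD j 0
      ≤ ∑ i' ∈ Finset.range i2, (μ i').getD j 0 :=
    Finset.sum_le_sum_of_subset (Finset.range_subset_range.mpr hi)
  rw [Finset.sum_range_succ] at hs
  simp only [dIdx]
  omega

lemma inj_lemma (μ : ℕ → List ℕ) {n : ℕ} {x y : ℕ × ℕ × ℕ}
    (hx : InIdx n μ x) (hy : InIdx n μ y)
    (hj : x.2.1 = y.2.1) (hd : dIdx μ x = dIdx μ y) : x = y := by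
  obtain ⟨i1, j1, k1⟩ := x
  obtain ⟨i2, j2, k2⟩ := y
  simp only at hj
  subst hj
  rcases lt_trichotomy i1 i2 with h | h | h
  · exact absurd hd (ne_of_lt (mono_lemma μ hx.2.2 h))
  · subst h
    simp only [dIdx] at hd
    have : k1 = k2 := by omega
    subst this; rfl
  · exact absurd hd.symm (ne_of_lt (mono_lemma μ hy.2.2 h))

lemma step_lemma {n : ℕ} {μ : ℕ → List ℕ} {v : ℕ × ℕ × ℕ → V} {e0 e1 : V →ₗ[𝕜] V}
    (hrep : IsRep n μ v e0 e1) {x : ℕ × ℕ × ℕ} (hx : InIdx n μ x) (hd : 0 < dIdx μ x) :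
    ∃ y : ℕ × ℕ × ℕ, InIdx n μ y ∧ y.2.1 = x.2.1 ∧ dIdx μ y + 1 = dIdx μ x ∧
      (e0 + e1) (v x) = v y := by
  classical
  obtain ⟨i, j, k⟩ := x
  obtain ⟨hin, hjl, hkl⟩ := hx
  cases k with
  | succ k' =>
    refine ⟨(i, j, k'), ⟨hin, hjl, lt_trans (Nat.lt_succ_self k') hkl⟩, rfl, ?_, ?_⟩
    · show k' + (∑ i' ∈ Finset.range i, (μ i').getD j 0) + 1
        = (k' + 1) + ∑ i' ∈ Finset.range i, (μ i').getD j 0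
      omega
    · rw [LinearMap.add_apply, hrep.e0_succ i j k' ⟨hin, hjl, hkl⟩,
        hrep.e1_pos i j k' ⟨hin, hjl, hkl⟩, add_zero]
  | zero =>
    have hsum : 0 < ∑ i' ∈ Finset.range i, (μ i').getD j 0 := by
      rw [show dIdx μ (i, j, 0)
        = 0 + ∑ i' ∈ Finset.range i, (μ i').getD j 0 from rfl] at hd
      omega
    have hex : ∃ m, m < i ∧ 0 < (μ m).getD j 0 := by
      by_contra h
      push_neg at h
      have hz : ∑ i' ∈ Finset.range i, (μ i').getD j 0 = 0 :=
        Finset.sum_eq_zero fun m hm => Nat.le_zero.mp (h m (Finset.mem_range.mp hm))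
      omega
    obtain ⟨m, hmi, hm⟩ := hex
    set P : ℕ → Prop := fun m => 0 < (μ m).getD j 0 with hP
    set i0 := Nat.findGreatest P (i - 1) with hi0
    have hP0 : P i0 := Nat.findGreatest_spec (P := P) (by omega : m ≤ i - 1) hm
    have hle : i0 ≤ i - 1 := Nat.findGreatest_le _
    have hi0i : i0 < i := by omega
    have hmid : ∀ i'', i0 < i'' → i'' < i → (μ i'').getD j 0 = 0 := by
      intro i'' h1 h2
      by_contra h
      exact Nat.findGreatest_is_greatest (P := P) h1 (by omega) (Nat.pos_of_ne_zero h)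
    have hgd : 0 < (μ i0).getD j 0 := hP0
    refine ⟨(i0, j, (μ i0).getD j 0 - 1),
      ⟨lt_trans hi0i hin, lt_length_of_getD_pos hgd, Nat.sub_lt hgd one_pos⟩, rfl, ?_, ?_⟩
    · show ((μ i0).getD j 0 - 1) + (∑ i' ∈ Finset.range i0, (μ i').getD j 0) + 1
        = 0 + ∑ i' ∈ Finset.range i, (μ i').getD j 0
      have hsplit : (∑ i' ∈ Finset.range (i0 + 1), (μ i').getD j 0)
          + ∑ i' ∈ Finset.Ico (i0 + 1) i, (μ i').getD j 0
          = ∑ i' ∈ Finset.range i, (μ i').getD j 0 := by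
        rw [Finset.range_eq_Ico, Finset.range_eq_Ico]
        exact Finset.sum_Ico_consecutive (fun i' => (μ i').getD j 0) (m := 0) (n := i0 + 1) (k := i) (Nat.zero_le _) (by omega)
      have hz : ∑ i' ∈ Finset.Ico (i0 + 1) i, (μ i').getD j 0 = 0 :=
        Finset.sum_eq_zero fun i'' h =>
          hmid i'' (Finset.mem_Ico.mp h).1 (Finset.mem_Ico.mp h).2
      have hss : ∑ i' ∈ Finset.range (i0 + 1), (μ i').getD j 0
          = (∑ i' ∈ Finset.range i0, (μ i').getD j 0) + (μ i0).getD j 0 :=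
        Finset.sum_range_succ _ _
      omega
    · rw [LinearMap.add_apply, hrep.e0_bot i j ⟨hin, hjl, hkl⟩,
        hrep.e1_link i i0 j ⟨hin, hjl, hkl⟩ hi0i hgd hmid, zero_add]

lemma zero_lemma {n : ℕ} {μ : ℕ → List ℕ} {v : ℕ × ℕ × ℕ → V} {e0 e1 : V →ₗ[𝕜] V}
    (hrep : IsRep n μ v e0 e1) {x : ℕ × ℕ × ℕ} (hx : InIdx n μ x) (hd : dIdx μ x = 0) :
    (e0 + e1) (v x) = 0 := by
  obtain ⟨i, j, k⟩ := x
  simp only [dIdx] at hd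
  have hk : k = 0 := by omega
  subst hk
  have hs : ∑ i'' ∈ Finset.range i, (μ i'').getD j 0 = 0 := by omega
  have hz : ∀ i' < i, (μ i').getD j 0 = 0 := fun i' hi' =>
    (Finset.sum_eq_zero_iff.mp hs) i' (Finset.mem_range.mpr hi')
  rw [LinearMap.add_apply, hrep.e0_bot i j hx, hrep.e1_none i j hx hz, add_zero]

lemma pow_lemma {n : ℕ} {μ : ℕ → List ℕ} {v : ℕ × ℕ × ℕ → V} {e0 e1 : V →ₗ[𝕜] V}
    (hrep : IsRep n μ v e0 e1) : ∀ (p : ℕ) (x : ℕ × ℕ × ℕ), InIdx n μ x → p ≤ dIdx μ x →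
    ∃ y : ℕ × ℕ × ℕ, InIdx n μ y ∧ y.2.1 = x.2.1 ∧ dIdx μ y + p = dIdx μ x ∧
      ((e0 + e1) ^ p) (v x) = v y := by
  intro p
  induction p with
  | zero => exact fun x hx _ => ⟨x, hx, rfl, rfl, by simp⟩
  | succ q ih =>
    intro x hx hd
    obtain ⟨y1, hy1, hj1, hd1, he1⟩ := step_lemma hrep hx (by omega)
    obtain ⟨y, hy, hj, hdy, hey⟩ := ih y1 hy1 (by omega)
    refine ⟨y, hy, hj.trans hj1, by omega, ?_⟩
    rw [pow_succ, Module.End.mul_apply, he1, hey]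

lemma kill_lemma {n : ℕ} {μ : ℕ → List ℕ} {v : ℕ × ℕ × ℕ → V} {e0 e1 : V →ₗ[𝕜] V}
    (hrep : IsRep n μ v e0 e1) {p : ℕ} {x : ℕ × ℕ × ℕ}
    (hx : InIdx n μ x) (hd : dIdx μ x < p) : ((e0 + e1) ^ p) (v x) = 0 := by
  obtain ⟨y, hy, hj, hdy, hey⟩ := pow_lemma hrep (dIdx μ x) x hx le_rfl
  have hz : (e0 + e1) (v y) = 0 := zero_lemma hrep hy (by omega)
  have hp : p = (p - dIdx μ x - 1) + 1 + dIdx μ x := by omega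
  rw [hp, pow_add, Module.End.mul_apply, hey, pow_succ, Module.End.mul_apply, hz, map_zero]

end StmtAux

/-- For the explicit representative `e = e0 + e1`, the kernel of `e^p` is
exactly the span of the basis vectors `v (i,j,k)` (0-indexed `k`) with
`(k+1) + Σ_{i' < i} μ_{i',j} ≤ p`, i.e. the span of the boxes in the first `p` columns of
the stacked Young diagram. -/
theorem representative_kernel_spanned_by_columns
    {𝕜 V : Type*} [Field 𝕜] [AddCommGroup V] [Module 𝕜 V]
    (n : ℕ) (μ : ℕ → List ℕ)
    (hpart : ∀ i < n, IsPartitionL (μ i)) (hcomp : ∀ i < n, 0 < (μ i).sum)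
    (v : ℕ × ℕ × ℕ → V) (e0 e1 : V →ₗ[𝕜] V) (hrep : IsRep n μ v e0 e1) :
    ∀ p : ℕ, LinearMap.ker ((e0 + e1) ^ p) =
      Submodule.span 𝕜 (v '' {x | InIdx n μ x ∧
        x.2.2 + ∑ i' ∈ Finset.range x.1, (μ i').getD x.2.1 0 < p}) := by
  classical
  intro p
  have hrange : Set.range (fun x : {x : ℕ × ℕ × ℕ // InIdx n μ x} => v x)
      = v '' {x | InIdx n μ x} := by
    rw [show (fun x : {x : ℕ × ℕ × ℕ // InIdx n μ x} => v ↑x) = v ∘ Subtype.val from rfl,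
      Set.range_comp, Subtype.range_coe_subtype]
  let b : Module.Basis {x : ℕ × ℕ × ℕ // InIdx n μ x} 𝕜 V :=
    Module.Basis.mk hrep.indep (by rw [hrange, hrep.spans])
  apply le_antisymm
  · intro u hu
    rw [LinearMap.mem_ker] at hu
    set c := b.repr u with hc
    have hu' : (Finsupp.linearCombination 𝕜 (fun x : {x // InIdx n μ x} => v ↑x)) c = u := by
      have h := b.linearCombination_repr u
      rwa [show ⇑b = fun x : {x // InIdx n μ x} => v ↑x from Module.Basis.coe_mk _ _] at h
    have husum : u = ∑ x ∈ c.support, c x • v ↑x := by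
      rw [← hu', Finsupp.linearCombination_apply, Finsupp.sum]
    have hGex : ∀ x : {x // InIdx n μ x}, ∃ y : {x // InIdx n μ x},
        p ≤ StmtAux.dIdx μ x.1 → (y.1.2.1 = x.1.2.1 ∧
          StmtAux.dIdx μ y.1 + p = StmtAux.dIdx μ x.1 ∧
          ((e0 + e1) ^ p) (v x.1) = v y.1) := by
      intro x
      by_cases h : p ≤ StmtAux.dIdx μ x.1
      · obtain ⟨y, hy, h1, h2, h3⟩ := StmtAux.pow_lemma hrep p x.1 x.2 h
        exact ⟨⟨y, hy⟩, fun _ => ⟨h1, h2, h3⟩⟩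
      · exact ⟨x, fun h' => absurd h' h⟩
    choose G hG using hGex
    set t := c.support.filter (fun x => p ≤ StmtAux.dIdx μ x.1) with ht
    have hsum0 : ∑ x ∈ t, c x • v (G x).1 = 0 := by
      have h1 : ((e0 + e1) ^ p) u = 0 := hu
      rw [husum, map_sum] at h1
      have h2 : ∀ x ∈ c.support, ((e0 + e1) ^ p) (c x • v ↑x)
          = c x • ((e0 + e1) ^ p) (v ↑x) := fun x _ => map_smul _ _ _
      rw [Finset.sum_congr rfl h2,
        ← Finset.sum_filter_add_sum_filter_not c.support
          (fun x => p ≤ StmtAux.dIdx μ x.1)] at h1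
      have h3 : ∑ x ∈ c.support.filter (fun x => ¬ p ≤ StmtAux.dIdx μ x.1),
          c x • ((e0 + e1) ^ p) (v ↑x) = 0 :=
        Finset.sum_eq_zero fun x hx => by
          rw [StmtAux.kill_lemma hrep x.2
            (not_le.mp (Finset.mem_filter.mp hx).2), smul_zero]
      rw [h3, add_zero] at h1
      have h4 : ∀ x ∈ t, c x • ((e0 + e1) ^ p) (v ↑x) = c x • v (G x).1 := fun x hx => by
        rw [(hG x (Finset.mem_filter.mp hx).2).2.2]
      exact (Finset.sum_congr rfl h4).symm.trans h1
    have hGinj : ∀ x1 ∈ t, ∀ x2 ∈ t, G x1 = G x2 → x1 = x2 := by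
      intro x1 hx1 x2 hx2 hgg
      have h1 := hG x1 (Finset.mem_filter.mp hx1).2
      have h2 := hG x2 (Finset.mem_filter.mp hx2).2
      have hj12 : x1.1.2.1 = x2.1.2.1 := by rw [← h1.1, ← h2.1, hgg]
      have hd12 : StmtAux.dIdx μ x1.1 = StmtAux.dIdx μ x2.1 := by
        rw [← h1.2.1, ← h2.2.1, hgg]
      exact Subtype.ext (StmtAux.inj_lemma μ x1.2 x2.2 hj12 hd12)
    have hindep : LinearIndependent 𝕜 (fun x : {x // x ∈ t} => v (G x.1).1) := by
      have hinj : Function.Injective (fun x : {x // x ∈ t} => G x.1) := by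
        intro a bb hab
        exact Subtype.ext (hGinj a.1 a.2 bb.1 bb.2 hab)
      exact hrep.indep.comp _ hinj
    have hczero : ∀ x ∈ t, c x = 0 := by
      intro x hx
      refine linearIndependent_iff'.mp hindep Finset.univ (fun y => c y.1) ?_ ⟨x, hx⟩
        (Finset.mem_univ _)
      rw [Finset.univ_eq_attach,
        show ∑ y ∈ t.attach, c ↑y • v (G ↑y).1 = ∑ y ∈ t, c y • v (G y).1 from
          Finset.sum_attach t (fun y => c y • v (G y).1)]
      exact hsum0
    have hsupp : ∀ x ∈ c.support, StmtAux.dIdx μ x.1 < p := by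
      intro x hx
      by_contra h
      exact (Finsupp.mem_support_iff.mp hx)
        (hczero x (Finset.mem_filter.mpr ⟨hx, not_lt.mp h⟩))
    rw [husum]
    exact Submodule.sum_mem _ fun x hx => Submodule.smul_mem _ _
      (Submodule.subset_span ⟨x.1, ⟨x.2, hsupp x hx⟩, rfl⟩)
  · rw [Submodule.span_le]
    rintro _ ⟨x, ⟨hxI, hxd⟩, rfl⟩
    simpa [LinearMap.mem_ker] using StmtAux.kill_lemma hrep hxI hxd
end

section
/- Let e be a nilpotent endomorphism of an N-dimensional 𝕜-vector space V of Jordan type λ ⊢ N, and let F_• be a full flag of V with e(F_i) ⊆ F_{i-1} for all i ≥ 1. Then there exists a unique standard tableau τ ∈ Std(λ) with Φ(F_•) = τ; in other words, the sequence of Jordan types of the restrictions e|_{F_i} (i = 0,1,...,N) is a nested sequence of partitions obtained at each step by adding a single box, and hence corresponds to a standard tableau of shape λ. -/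
/-- The number of entries `a ∈ {1,...,i}` of the tableau `T` of shape `μ` lying in the
first `p` columns (0-indexed columns `c < p`). -/
noncomputable def entriesInCols (μ : List ℕ) (T : ℕ → ℕ → ℕ) (i p : ℕ) : ℕ :=
  Set.ncard {a : ℕ | 1 ≤ a ∧ a ≤ i ∧
    ∃ r c, r < μ.length ∧ c < μ.getD r 0 ∧ c < p ∧ T r c = a}

section LinearDefs

variable {𝕜 V : Type*} [Field 𝕜] [AddCommGroup V] [Module 𝕜 V]

/-- A full flag `0 = F 0 ⊂ F 1 ⊂ ... ⊂ F N = V` of an `N`-dimensional space. -/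
structure IsFullFlag (N : ℕ) (F : ℕ → Submodule 𝕜 V) : Prop where
  mono : Monotone F
  bot : F 0 = ⊥
  top : F N = ⊤
  dim : ∀ i ≤ N, Module.finrank 𝕜 ↥(F i) = i

/-- A full flag `0 = F 0 ⊂ F 1 ⊂ ... ⊂ F l = U` of an `l`-dimensional subspace `U ⊆ V`. -/
structure IsFlagOf (U : Submodule 𝕜 V) (l : ℕ) (F : ℕ → Submodule 𝕜 V) : Prop where
  mono : Monotone F
  le : ∀ d, F d ≤ U
  bot : F 0 = ⊥
  top : F l = U
  dim : ∀ d ≤ l, Module.finrank 𝕜 ↥(F d) = d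

/-- `V = V_0 ⊕ ... ⊕ V_{n-1}` is an internal direct sum decomposition with
`dim V_k = lam k`. -/
structure IsDecomp (n : ℕ) (lam : ℕ → ℕ) (Vsub : ℕ → Submodule 𝕜 V) : Prop where
  dim : ∀ k < n, Module.finrank 𝕜 ↥(Vsub k) = lam k
  indep : ∀ k < n, Disjoint (Vsub k) (∑ l ∈ (Finset.range n).erase k, Vsub l)
  total : ∑ k ∈ Finset.range n, Vsub k = ⊤

/-- Partial sums `lam 0 + ... + lam (k-1)`. -/
def pSum (lam : ℕ → ℕ) (k : ℕ) : ℕ := ∑ l ∈ Finset.range k, lam l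

/-- For `1 ≤ i`, the (0-indexed) index `j` of the block containing position `i`, i.e. the
largest `j ≤ n` with `lam 0 + ... + lam (j-1) < i`. -/
def LSidx (n : ℕ) (lam : ℕ → ℕ) (i : ℕ) : ℕ :=
  Nat.findGreatest (fun j => pSum lam j < i) n

/-- The Lusztig–Spaltenstein flag: `F̄ i = W_{j-1} + F j d` where `j = LSidx n lam i` is the
block containing position `i`, `W_{j-1} = V_0 + ... + V_{j-1}` and `d = i - (lam 0 + ... + lam (j-1))`. -/
def LSflag (n : ℕ) (lam : ℕ → ℕ) (Vsub : ℕ → Submodule 𝕜 V)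
    (F : ℕ → ℕ → Submodule 𝕜 V) (i : ℕ) : Submodule 𝕜 V :=
  (∑ k ∈ Finset.range (LSidx n lam i), Vsub k) +
    F (LSidx n lam i) (i - pSum lam (LSidx n lam i))

end LinearDefs

section Helpers

lemma aux_Icc_succ (a : ℕ) (ha : 1 ≤ a) :
    Finset.Icc 1 a = insert a (Finset.Icc 1 (a - 1)) := by
  ext x
  simp only [Finset.mem_Icc, Finset.mem_insert]
  omega

lemma aux_card_succ (g : ℕ → Prop) [DecidablePred g] (a : ℕ) (ha : 1 ≤ a) :
    ((Finset.Icc 1 a).filter g).card =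
      ((Finset.Icc 1 (a - 1)).filter g).card + (if g a then 1 else 0) := by
  rw [aux_Icc_succ a ha, Finset.filter_insert]
  have hnot : a ∉ (Finset.Icc 1 (a - 1)).filter g := by
    simp only [Finset.mem_filter, Finset.mem_Icc]
    omega
  split
  · rw [Finset.card_insert_of_notMem hnot]
  · omega

lemma aux_range_filter {n : ℕ} (p : ℕ → Prop) [DecidablePred p]
    (hdc : ∀ j j', j ≤ j' → j' < n → p j' → p j) (r : ℕ) :
    r ∈ (Finset.range n).filter p ↔ r < ((Finset.range n).filter p).card := by
  constructor
  · intro hr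
    have hr' := Finset.mem_filter.mp hr
    have hrn := Finset.mem_range.mp hr'.1
    have hsub : Finset.range (r + 1) ⊆ (Finset.range n).filter p := by
      intro j hj
      have hj' := Finset.mem_range.mp hj
      refine Finset.mem_filter.mpr ⟨Finset.mem_range.mpr (by omega), ?_⟩
      exact hdc j r (by omega) hrn hr'.2
    have := Finset.card_le_card hsub
    simp only [Finset.card_range] at this
    omega
  · intro hr
    by_contra hmem
    have hsub : (Finset.range n).filter p ⊆ Finset.range r := by
      intro j hj
      have hj' := Finset.mem_filter.mp hj
      have hjn := Finset.mem_range.mp hj'.1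
      refine Finset.mem_range.mpr ?_
      by_contra hjr
      push_neg at hjr
      exact hmem (Finset.mem_filter.mpr ⟨Finset.mem_range.mpr (by omega),
        hdc r j hjr hjn hj'.2⟩)
    have := Finset.card_le_card hsub
    simp only [Finset.card_range] at this
    omega

lemma aux_list_sum (l : List ℕ) : l.sum = ∑ j ∈ Finset.range l.length, l.getD j 0 := by
  induction l with
  | nil => simp
  | cons a t ih =>
    rw [List.length_cons, Finset.sum_range_succ', List.sum_cons, ih]
    simp [add_comm]

lemma aux_getD_anti {l : List ℕ} (hl : l.Pairwise (· ≥ ·)) {j j' : ℕ} (hjj' : j ≤ j')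
    (hj' : j' < l.length) : l.getD j' 0 ≤ l.getD j 0 := by
  rcases eq_or_lt_of_le hjj' with rfl | h
  · exact le_refl _
  · have hj : j < l.length := lt_trans h hj'
    rw [List.getD_eq_getElem l 0 hj', List.getD_eq_getElem l 0 hj]
    have := hl.rel_get_of_lt (a := ⟨j, hj⟩) (b := ⟨j', hj'⟩) h
    simpa using this

end Helpers

open Module Submodule

section Lin
set_option linter.unusedSectionVars false
variable {𝕜 V : Type*} [Field 𝕜] [AddCommGroup V] [Module 𝕜 V] [FiniteDimensional 𝕜 V]

lemma aux_ker_pow_mono (e : V →ₗ[𝕜] V) {m n : ℕ} (h : m ≤ n) :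
    LinearMap.ker (e ^ m) ≤ LinearMap.ker (e ^ n) := by
  intro x hx
  have hn : e ^ n = e ^ (n - m) * e ^ m := by rw [← pow_add]; congr 1; omega
  simp only [LinearMap.mem_ker] at hx ⊢
  rw [hn, Module.End.mul_apply, hx, map_zero]

lemma aux_L1 {A B K : Submodule 𝕜 V} (hAB : A ≤ B)
    (hd : finrank 𝕜 B ≤ finrank 𝕜 A + 1) :
    finrank 𝕜 ↥(B ⊓ K) ≤ finrank 𝕜 ↥(A ⊓ K) + 1 := by
  have h1 := Submodule.finrank_sup_add_finrank_inf_eq (B ⊓ K) A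
  have h2 : (B ⊓ K) ⊓ A = A ⊓ K := by
    rw [inf_comm B K, inf_assoc, inf_eq_right.mpr hAB, inf_comm]
  have h3 : finrank 𝕜 ↥((B ⊓ K) ⊔ A) ≤ finrank 𝕜 B :=
    Submodule.finrank_mono (sup_le inf_le_left hAB)
  have h4 : finrank 𝕜 ↥(B ⊓ K) ≤ finrank 𝕜 B := Submodule.finrank_mono inf_le_left
  rw [h2] at h1
  omega

lemma aux_L2 {A B K K' : Submodule 𝕜 V} (hAB : A ≤ B) (hKK' : K ≤ K')
    (h : finrank 𝕜 ↥(A ⊓ K) < finrank 𝕜 ↥(B ⊓ K)) :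
    finrank 𝕜 ↥(A ⊓ K') < finrank 𝕜 ↥(B ⊓ K') := by
  have hne : ¬ (B ⊓ K ≤ A) := by
    intro hle
    exact absurd (Submodule.finrank_mono (le_inf hle inf_le_right)) (by omega)
  obtain ⟨x, hxBK, hxA⟩ := SetLike.not_le_iff_exists.mp hne
  apply Submodule.finrank_lt_finrank_of_lt
  have hle2 : A ⊓ K' ≤ B ⊓ K' := inf_le_inf_right K' hAB
  refine lt_of_le_of_ne hle2 (fun heq => hxA ?_)
  have hx : x ∈ B ⊓ K' := le_inf inf_le_left (le_trans inf_le_right hKK') hxBK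
  rw [← heq] at hx
  exact (Submodule.mem_inf.mp hx).1

lemma aux_map_dim (e : V →ₗ[𝕜] V) (S : Submodule 𝕜 V) :
    finrank 𝕜 ↥(Submodule.map e S) + finrank 𝕜 ↥(S ⊓ LinearMap.ker e) = finrank 𝕜 S := by
  have h := LinearMap.finrank_range_add_finrank_ker (e.domRestrict S)
  rw [LinearMap.range_domRestrict] at h
  rw [← h]
  congr 1
  rw [LinearMap.ker_domRestrict]
  rw [← Submodule.finrank_map_subtype_eq S, Submodule.map_comap_subtype]

lemma aux_concave (e : V →ₗ[𝕜] V) {U : Submodule 𝕜 V} (hU : Submodule.map e U ≤ U) (p : ℕ) :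
    finrank 𝕜 ↥(U ⊓ LinearMap.ker (e ^ (p + 2))) + finrank 𝕜 ↥(U ⊓ LinearMap.ker (e ^ p)) ≤
      2 * finrank 𝕜 ↥(U ⊓ LinearMap.ker (e ^ (p + 1))) := by
  have hstep : ∀ q : ℕ, ∀ x : V, x ∈ U ⊓ LinearMap.ker (e ^ (q + 1)) →
      e x ∈ U ⊓ LinearMap.ker (e ^ q) := by
    intro q x hx
    obtain ⟨h1, h2⟩ := Submodule.mem_inf.mp hx
    refine Submodule.mem_inf.mpr ⟨hU (Submodule.mem_map_of_mem h1), ?_⟩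
    rw [LinearMap.mem_ker] at h2 ⊢
    have h3 : (e ^ q) (e x) = (e ^ (q + 1)) x := by rw [pow_succ, Module.End.mul_apply]
    rw [h3, h2]
  have hker1 : ∀ q : ℕ, 1 ≤ q →
      U ⊓ LinearMap.ker (e ^ q) ⊓ LinearMap.ker e = U ⊓ LinearMap.ker e := by
    intro q hq
    rw [inf_assoc]
    congr 1
    rw [inf_eq_right]
    have h := aux_ker_pow_mono e hq
    simpa using h
  have hA1 := aux_map_dim e (U ⊓ LinearMap.ker (e ^ (p + 2)))
  have hB1 := aux_map_dim e (U ⊓ LinearMap.ker (e ^ (p + 1)))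
  rw [hker1 _ (by omega)] at hA1
  rw [hker1 _ (by omega)] at hB1
  have hAK : Submodule.map e (U ⊓ LinearMap.ker (e ^ (p + 2))) ⊓ (U ⊓ LinearMap.ker (e ^ p)) =
      Submodule.map e (U ⊓ LinearMap.ker (e ^ (p + 1))) := by
    apply le_antisymm
    · rintro x hx
      obtain ⟨hxA, hxK⟩ := Submodule.mem_inf.mp hx
      obtain ⟨y, hy, rfl⟩ := hxA
      refine Submodule.mem_map_of_mem (Submodule.mem_inf.mpr ⟨(Submodule.mem_inf.mp hy).1, ?_⟩)
      have h2 := (Submodule.mem_inf.mp hxK).2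
      rw [LinearMap.mem_ker] at h2 ⊢
      rw [pow_succ, Module.End.mul_apply, h2]
    · refine le_inf (Submodule.map_mono (inf_le_inf_left U (aux_ker_pow_mono e (by omega)))) ?_
      rintro x ⟨y, hy, rfl⟩
      exact hstep p y hy
  have h2 := Submodule.finrank_sup_add_finrank_inf_eq
    (Submodule.map e (U ⊓ LinearMap.ker (e ^ (p + 2)))) (U ⊓ LinearMap.ker (e ^ p))
  rw [hAK] at h2
  have h3 : finrank 𝕜 ↥(Submodule.map e (U ⊓ LinearMap.ker (e ^ (p + 2))) ⊔
      (U ⊓ LinearMap.ker (e ^ p))) ≤ finrank 𝕜 ↥(U ⊓ LinearMap.ker (e ^ (p + 1))) := by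
    apply Submodule.finrank_mono
    refine sup_le ?_ (inf_le_inf_left U (aux_ker_pow_mono e (by omega)))
    rintro x ⟨y, hy, rfl⟩
    exact hstep (p + 1) y hy
  omega

end Lin

lemma aux_comb (N : ℕ) (lam : List ℕ) (hlam : IsPartitionL lam) (hsum : lam.sum = N)
    (col : ℕ → ℕ)
    (hshape : ∀ i ≤ N, ∀ c : ℕ,
      ((Finset.Icc 1 i).filter fun a => col a = c + 1).card ≤
        ((Finset.Icc 1 i).filter fun a => col a = c).card)
    (hfinal : ∀ c : ℕ, ((Finset.Icc 1 N).filter fun a => col a = c).card =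
      ((Finset.range lam.length).filter fun j => c < lam.getD j 0).card) :
    ∃ τ : ℕ → ℕ → ℕ, IsStdTableau lam τ ∧
      ∀ i ≤ N, ∀ p : ℕ,
        entriesInCols lam τ i p = ((Finset.Icc 1 i).filter fun a => col a < p).card := by
  classical
  set cnt : ℕ → ℕ → ℕ := fun i c => ((Finset.Icc 1 i).filter fun a => col a = c).card with hcnt
  set row : ℕ → ℕ := fun a => cnt (a - 1) (col a) with hrow
  set S : ℕ → ℕ → Finset ℕ :=
    fun r c => (Finset.Icc 1 N).filter fun a => row a = r ∧ col a = c with hS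
  set τ : ℕ → ℕ → ℕ := fun r c => (S r c).sum id with hτ
  -- cnt monotone in i
  have hcntmono : ∀ i i' c, i ≤ i' → cnt i c ≤ cnt i' c := by
    intro i i' c h
    exact Finset.card_le_card (Finset.filter_subset_filter _ (Finset.Icc_subset_Icc_right h))
  -- cnt a (col a) = row a + 1
  have hcnta : ∀ a, 1 ≤ a → cnt a (col a) = row a + 1 := by
    intro a ha
    show ((Finset.Icc 1 a).filter fun x => col x = col a).card = _
    rw [aux_card_succ _ a ha, if_pos rfl]
  -- rows strictly increase within a column
  have hrowlt : ∀ a a', 1 ≤ a → a < a' → col a = col a' → row a < row a' := by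
    intro a a' ha haa' hcc
    have hss : (Finset.Icc 1 (a - 1)).filter (fun x => col x = col a) ⊂
        (Finset.Icc 1 (a' - 1)).filter (fun x => col x = col a') := by
      constructor
      · intro x hx
        have hx' := Finset.mem_filter.mp hx
        have := Finset.mem_Icc.mp hx'.1
        exact Finset.mem_filter.mpr ⟨Finset.mem_Icc.mpr (by omega), by rw [hx'.2, hcc]⟩
      · intro hsub
        have : a ∈ (Finset.Icc 1 (a - 1)).filter (fun x => col x = col a) :=
          hsub (Finset.mem_filter.mpr ⟨Finset.mem_Icc.mpr (by omega), hcc⟩)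
        have := (Finset.mem_Icc.mp (Finset.mem_filter.mp this).1).2
        omega
    exact Finset.card_lt_card hss
  -- cnt antitone in c
  have hcntanti : ∀ i, i ≤ N → ∀ c c', c ≤ c' → cnt i c' ≤ cnt i c := by
    intro i hi c c' hcc
    induction c' with
    | zero => simp_all
    | succ d ih =>
      rcases Nat.lt_or_ge c (d + 1) with h | h
      · exact le_trans (hshape i hi d) (ih (by omega))
      · have : c = d + 1 := by omega
        subst this; exact le_refl _
  -- box validity iff
  have hboxIff : ∀ r c : ℕ, (r < lam.length ∧ c < lam.getD r 0) ↔ r < cnt N c := by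
    intro r c
    have hdc : ∀ j j', j ≤ j' → j' < lam.length → c < lam.getD j' 0 → c < lam.getD j 0 :=
      fun j j' hjj hj' hcj => lt_of_lt_of_le hcj (aux_getD_anti hlam.1 hjj hj')
    have h1 := aux_range_filter (fun j => c < lam.getD j 0) hdc r
    have h2 : (r < lam.length ∧ c < lam.getD r 0) ↔
        r ∈ (Finset.range lam.length).filter fun j => c < lam.getD j 0 := by
      simp [Finset.mem_filter, Finset.mem_range, and_comm]
    rw [h2, h1, ← hfinal c]
  -- each a ∈ [1,N] occupies a valid box
  have hvalid : ∀ a, 1 ≤ a → a ≤ N →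
      row a < lam.length ∧ col a < lam.getD (row a) 0 := by
    intro a h1 h2
    refine (hboxIff (row a) (col a)).mpr ?_
    have := hcnta a h1
    have := hcntmono a N (col a) h2
    omega
  -- injectivity of a ↦ (row a, col a)
  have hinj2 : ∀ a a', 1 ≤ a → 1 ≤ a' → row a = row a' → col a = col a' → a = a' := by
    intro a a' ha ha' hr hc
    rcases lt_trichotomy a a' with h | h | h
    · exact absurd hr (Nat.ne_of_lt (hrowlt a a' ha h hc))
    · exact h
    · exact absurd hr.symm (Nat.ne_of_lt (hrowlt a' a ha' h hc.symm))
  -- the boxes finset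
  set B : Finset (ℕ × ℕ) := (Finset.range lam.length).biUnion
    (fun r => (Finset.range (lam.getD r 0)).image fun c => (r, c)) with hB
  have hmemB : ∀ rc : ℕ × ℕ, rc ∈ B ↔ rc.1 < lam.length ∧ rc.2 < lam.getD rc.1 0 := by
    rintro ⟨r, c⟩
    simp only [hB, Finset.mem_biUnion, Finset.mem_range, Finset.mem_image]
    constructor
    · rintro ⟨r', hr', c', hc', heq⟩
      obtain ⟨rfl, rfl⟩ := Prod.mk.injEq .. ▸ And.intro (congrArg Prod.fst heq) (congrArg Prod.snd heq)
      exact ⟨hr', hc'⟩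
    · rintro ⟨hr, hc⟩
      exact ⟨r, hr, c, hc, rfl⟩
  have hcardB : B.card = N := by
    rw [hB, Finset.card_biUnion]
    · have : ∀ r ∈ Finset.range lam.length,
          ((Finset.range (lam.getD r 0)).image fun c => (r, c)).card = lam.getD r 0 := by
        intro r _
        rw [Finset.card_image_of_injective _ (fun x y h => congrArg Prod.snd h),
          Finset.card_range]
      rw [Finset.sum_congr rfl this, ← aux_list_sum, hsum]
    · intro x hx y hy hxy
      simp only [Finset.disjoint_left, Finset.mem_image, Finset.mem_range]
      rintro ⟨a, b⟩ ⟨c1, hc1, heq1⟩ ⟨c2, hc2, heq2⟩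
      have e1 : x = a := congrArg Prod.fst heq1
      have e2 : y = a := congrArg Prod.fst heq2
      exact hxy (by omega)
  -- image of [1,N] is exactly B
  have himage : (Finset.Icc 1 N).image (fun a => (row a, col a)) = B := by
    apply Finset.eq_of_subset_of_card_le
    · intro rc hrc
      obtain ⟨a, ha, rfl⟩ := Finset.mem_image.mp hrc
      have ha' := Finset.mem_Icc.mp ha
      exact (hmemB _).mpr (hvalid a ha'.1 ha'.2)
    · have hinjOn : Set.InjOn (fun a => (row a, col a)) (Finset.Icc 1 N) := by
        intro a ha a' ha' heq
        have h1 := (Finset.mem_Icc.mp (by exact_mod_cast ha)).1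
        have h2 := (Finset.mem_Icc.mp (by exact_mod_cast ha')).1
        exact hinj2 a a' h1 h2 (congrArg Prod.fst heq) (congrArg Prod.snd heq)
      rw [hcardB, Finset.card_image_of_injOn hinjOn, Nat.card_Icc]
      omega
  have hsurj : ∀ r c, r < lam.length → c < lam.getD r 0 →
      ∃ a, 1 ≤ a ∧ a ≤ N ∧ row a = r ∧ col a = c := by
    intro r c hr hc
    have : (r, c) ∈ B := (hmemB _).mpr ⟨hr, hc⟩
    rw [← himage] at this
    obtain ⟨a, ha, heq⟩ := Finset.mem_image.mp this
    have ha' := Finset.mem_Icc.mp ha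
    exact ⟨a, ha'.1, ha'.2, congrArg Prod.fst heq, congrArg Prod.snd heq⟩
  -- τ at the box of a equals a
  have htauspec : ∀ a, 1 ≤ a → a ≤ N → τ (row a) (col a) = a := by
    intro a h1 h2
    have hset : S (row a) (col a) = {a} := by
      apply Finset.eq_singleton_iff_unique_mem.mpr
      constructor
      · exact Finset.mem_filter.mpr ⟨Finset.mem_Icc.mpr ⟨h1, h2⟩, rfl, rfl⟩
      · intro b hb
        have hb' := Finset.mem_filter.mp hb
        have hb1 := (Finset.mem_Icc.mp hb'.1).1
        exact hinj2 b a hb1 h1 hb'.2.1 hb'.2.2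
    show (S (row a) (col a)).sum id = a
    rw [hset, Finset.sum_singleton, id]
  have htaubox : ∀ r c, r < lam.length → c < lam.getD r 0 →
      ∃ a, 1 ≤ a ∧ a ≤ N ∧ row a = r ∧ col a = c ∧ τ r c = a := by
    intro r c hr hc
    obtain ⟨a, h1, h2, h3, h4⟩ := hsurj r c hr hc
    exact ⟨a, h1, h2, h3, h4, by rw [← h3, ← h4, htauspec a h1 h2]⟩
  refine ⟨τ, ?_, ?_⟩
  · constructor
    · intro r c hr hc
      obtain ⟨a, h1, h2, _, _, h5⟩ := htaubox r c hr hc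
      rw [h5, hsum]; exact ⟨h1, h2⟩
    · intro a h1 h2
      rw [hsum] at h2
      exact ⟨row a, col a, (hvalid a h1 h2).1, (hvalid a h1 h2).2, htauspec a h1 h2⟩
    · intro r c r' c' hr hc hr' hc' heq
      obtain ⟨a, a1, a2, a3, a4, a5⟩ := htaubox r c hr hc
      obtain ⟨b, b1, b2, b3, b4, b5⟩ := htaubox r' c' hr' hc'
      rw [a5, b5] at heq
      subst heq
      exact ⟨by rw [← a3, ← b3], by rw [← a4, ← b4]⟩
    · intro r c c' hr hcc' hc'
      have hc : c < lam.getD r 0 := lt_trans hcc' hc'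
      obtain ⟨a, a1, a2, a3, a4, a5⟩ := htaubox r c hr hc
      obtain ⟨b, b1, b2, b3, b4, b5⟩ := htaubox r c' hr hc'
      rw [a5, b5]
      by_contra hab
      push_neg at hab
      rcases eq_or_lt_of_le hab with heq | hlt
      · subst heq
        rw [← a4, b4] at hcc'
        omega
      · -- b < a, cnt b c' = r + 1, cnt b c ≤ r
        have e1 : cnt b (col b) = row b + 1 := hcnta b b1
        rw [b3, b4] at e1
        have e2 : cnt b c ≤ r := by
          have hss : ∀ x ∈ (Finset.Icc 1 b).filter fun y => col y = c, row x < r := by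
            intro x hx
            have hx' := Finset.mem_filter.mp hx
            have hx1 := Finset.mem_Icc.mp hx'.1
            have : row x < row a := by
              apply hrowlt x a hx1.1 (by omega)
              rw [hx'.2, a4]
            omega
          have himg : ((Finset.Icc 1 b).filter fun y => col y = c).image row ⊆
              Finset.range r := by
            intro x hx
            obtain ⟨y, hy, rfl⟩ := Finset.mem_image.mp hx
            exact Finset.mem_range.mpr (hss y hy)
          have hinj3 : Set.InjOn row ((Finset.Icc 1 b).filter fun y => col y = c) := by
            intro x hx y hy hxy
            have hx' := Finset.mem_filter.mp hx
            have hy' := Finset.mem_filter.mp hy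
            exact hinj2 x y (Finset.mem_Icc.mp hx'.1).1 (Finset.mem_Icc.mp hy'.1).1 hxy
              (by rw [hx'.2, hy'.2])
          calc cnt b c = (((Finset.Icc 1 b).filter fun y => col y = c).image row).card :=
                (Finset.card_image_of_injOn hinj3).symm
            _ ≤ (Finset.range r).card := Finset.card_le_card himg
            _ = r := Finset.card_range r
        have e3 : cnt b c' ≤ cnt b c := hcntanti b (by omega) c c' (by omega)
        omega
    · intro r r' c hrr' hr' hc
      have hcr : c < lam.getD r 0 :=
        lt_of_lt_of_le hc (aux_getD_anti hlam.1 (by omega) hr')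
      obtain ⟨a, a1, a2, a3, a4, a5⟩ := htaubox r c (by omega) hcr
      obtain ⟨b, b1, b2, b3, b4, b5⟩ := htaubox r' c hr' hc
      rw [a5, b5]
      rcases lt_trichotomy a b with h | h | h
      · exact h
      · subst h; rw [← a3, ← b3] at hrr'; omega
      · have := hrowlt b a b1 h (by rw [a4, b4])
        rw [a3, b3] at this
        omega
  · intro i hi p
    have hset : {a : ℕ | 1 ≤ a ∧ a ≤ i ∧ ∃ r c, r < lam.length ∧ c < lam.getD r 0 ∧
        c < p ∧ τ r c = a} = ↑((Finset.Icc 1 i).filter fun a => col a < p) := by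
      ext a
      simp only [Set.mem_setOf_eq, Finset.coe_filter, Finset.mem_Icc, Set.mem_setOf_eq]
      constructor
      · rintro ⟨h1, h2, r, c, hr, hc, hcp, hτa⟩
        obtain ⟨b, b1, b2, b3, b4, b5⟩ := htaubox r c hr hc
        rw [b5] at hτa
        subst hτa
        exact ⟨⟨h1, h2⟩, by rw [b4]; exact hcp⟩
      · rintro ⟨⟨h1, h2⟩, hcp⟩
        exact ⟨h1, h2, row a, col a, (hvalid a h1 (by omega)).1, (hvalid a h1 (by omega)).2,
          hcp, htauspec a h1 (by omega)⟩
    rw [entriesInCols, hset, Set.ncard_coe_finset]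

lemma aux_std_count (N : ℕ) (lam : List ℕ) (hlam : IsPartitionL lam) (hsum : lam.sum = N)
    (τ : ℕ → ℕ → ℕ) (hτ : IsStdTableau lam τ) :
    ∃ cl rw : ℕ → ℕ,
      (∀ a, 1 ≤ a → a ≤ N → rw a < lam.length ∧ cl a < lam.getD (rw a) 0 ∧
        τ (rw a) (cl a) = a) ∧
      (∀ i ≤ N, ∀ p : ℕ,
        entriesInCols lam τ i p = ((Finset.Icc 1 i).filter fun a => cl a < p).card) ∧
      (∀ a, 1 ≤ a → a ≤ N →
        rw a = ((Finset.Icc 1 (a - 1)).filter fun a' => cl a' = cl a).card) := by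
  classical
  set P : ℕ → Prop := fun a => ∃ rc : ℕ × ℕ, rc.1 < lam.length ∧ rc.2 < lam.getD rc.1 0 ∧
    τ rc.1 rc.2 = a with hP
  set rw : ℕ → ℕ := fun a => if h : P a then (Classical.choose h).1 else 0 with hrw
  set cl : ℕ → ℕ := fun a => if h : P a then (Classical.choose h).2 else 0 with hcl
  have hbox : ∀ a, 1 ≤ a → a ≤ N → rw a < lam.length ∧ cl a < lam.getD (rw a) 0 ∧
      τ (rw a) (cl a) = a := by
    intro a h1 h2
    have hPa : P a := by
      obtain ⟨r, c, hr, hc, he⟩ := hτ.exists_box a h1 (by rw [hsum]; exact h2)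
      exact ⟨(r, c), hr, hc, he⟩
    have hspec := Classical.choose_spec hPa
    simp only [hrw, hcl, dif_pos hPa]
    exact hspec
  -- uniqueness of boxes
  have huniq : ∀ a, 1 ≤ a → a ≤ N → ∀ r c, r < lam.length → c < lam.getD r 0 →
      τ r c = a → r = rw a ∧ c = cl a := by
    intro a h1 h2 r c hr hc he
    obtain ⟨b1, b2, b3⟩ := hbox a h1 h2
    exact hτ.inj r c (rw a) (cl a) hr hc b1 b2 (by rw [he, b3])
  refine ⟨cl, rw, hbox, ?_, ?_⟩
  · intro i hi p
    have hset : {a : ℕ | 1 ≤ a ∧ a ≤ i ∧ ∃ r c, r < lam.length ∧ c < lam.getD r 0 ∧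
        c < p ∧ τ r c = a} = ↑((Finset.Icc 1 i).filter fun a => cl a < p) := by
      ext a
      simp only [Set.mem_setOf_eq, Finset.coe_filter, Finset.mem_Icc, Set.mem_setOf_eq]
      constructor
      · rintro ⟨h1, h2, r, c, hr, hc, hcp, he⟩
        obtain ⟨hre, hce⟩ := huniq a h1 (by omega) r c hr hc he
        exact ⟨⟨h1, h2⟩, by omega⟩
      · rintro ⟨⟨h1, h2⟩, hcp⟩
        obtain ⟨b1, b2, b3⟩ := hbox a h1 (by omega)
        exact ⟨h1, h2, rw a, cl a, b1, b2, hcp, b3⟩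
    rw [entriesInCols, hset, Set.ncard_coe_finset]
  · intro a h1 h2
    obtain ⟨b1, b2, b3⟩ := hbox a h1 h2
    -- bijection between the filter set and range (rw a) via rw
    have hmaps : ∀ b ∈ (Finset.Icc 1 (a - 1)).filter fun a' => cl a' = cl a,
        rw b ∈ Finset.range (rw a) := by
      intro b hb
      have hb' := Finset.mem_filter.mp hb
      have hb1 := Finset.mem_Icc.mp hb'.1
      obtain ⟨c1, c2, c3⟩ := hbox b hb1.1 (by omega)
      refine Finset.mem_range.mpr ?_
      rcases lt_trichotomy (rw b) (rw a) with h | h | h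
      · exact h
      · exfalso
        have : τ (rw b) (cl b) = τ (rw a) (cl a) := by rw [h, hb'.2]
        rw [c3, b3] at this
        omega
      · exfalso
        have hc2' : cl a < lam.getD (rw b) 0 := by rw [← hb'.2]; exact c2
        have hlt := hτ.col_lt (rw a) (rw b) (cl a) h c1 hc2'
        rw [b3] at hlt
        have hc3' : τ (rw b) (cl a) = b := by rw [← hb'.2]; exact c3
        rw [hc3'] at hlt
        omega
    have hinj : ∀ b ∈ (Finset.Icc 1 (a - 1)).filter fun a' => cl a' = cl a,
        ∀ b' ∈ (Finset.Icc 1 (a - 1)).filter fun a' => cl a' = cl a,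
        rw b = rw b' → b = b' := by
      intro b hb b' hb'
      intro hrr
      have hbm := Finset.mem_filter.mp hb
      have hbm' := Finset.mem_filter.mp hb'
      have hb1 := Finset.mem_Icc.mp hbm.1
      have hb1' := Finset.mem_Icc.mp hbm'.1
      obtain ⟨c1, c2, c3⟩ := hbox b hb1.1 (by omega)
      obtain ⟨d1, d2, d3⟩ := hbox b' hb1'.1 (by omega)
      have : τ (rw b) (cl b) = τ (rw b') (cl b') := by
        rw [hrr, hbm.2, hbm'.2]
      rw [c3, d3] at this
      exact this
    have hsurjb : ∀ r' ∈ Finset.range (rw a),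
        ∃ b, ∃ _ : b ∈ (Finset.Icc 1 (a - 1)).filter fun a' => cl a' = cl a, rw b = r' := by
      intro r' hr'
      have hr'' := Finset.mem_range.mp hr'
      have hr'len : r' < lam.length := by omega
      have hcr' : cl a < lam.getD r' 0 :=
        lt_of_lt_of_le b2 (aux_getD_anti hlam.1 (by omega) b1)
      set b := τ r' (cl a) with hbdef
      obtain ⟨e1, e2⟩ := hτ.entry_mem r' (cl a) hr'len hcr'
      rw [hsum] at e2
      obtain ⟨f1, f2⟩ := huniq b e1 e2 r' (cl a) hr'len hcr' rfl
      have hba : b < a := by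
        have := hτ.col_lt r' (rw a) (cl a) hr'' b1 b2
        rw [b3] at this
        exact this
      refine ⟨b, Finset.mem_filter.mpr ⟨Finset.mem_Icc.mpr ⟨e1, by omega⟩, f2.symm⟩, f1.symm⟩
    have := Finset.card_bij (fun b _ => rw b) hmaps hinj hsurjb
    rw [this, Finset.card_range]

/-- For a nilpotent `e` of Jordan type `λ ⊢ N` and a full flag `F` in the
Springer fibre of `e`, there is a unique standard tableau `τ ∈ Std(λ)` with `Φ(F) = τ`:
for all `i ≤ N` and `p`, `dim ker((e|_{F i})^p)` is the number of entries `a ∈ {1,...,i}`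
in the first `p` columns of `τ`. -/
theorem spaltenstein_invariant_exists_unique
    {𝕜 V : Type*} [Field 𝕜] [AddCommGroup V] [Module 𝕜 V] [FiniteDimensional 𝕜 V]
    (N : ℕ) (lam : List ℕ) (hlam : IsPartitionL lam) (hsum : lam.sum = N)
    (hdim : Module.finrank 𝕜 V = N)
    (e : V →ₗ[𝕜] V) (henil : IsNilpotent e)
    (htype : ∀ p : ℕ, Module.finrank 𝕜 ↥(LinearMap.ker (e ^ p)) =
      ∑ j ∈ Finset.range lam.length, min p (lam.getD j 0))
    (F : ℕ → Submodule 𝕜 V) (hF : IsFullFlag N F)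
    (hspringer : ∀ i, Submodule.map e (F (i + 1)) ≤ F i) :
    (∃ τ : ℕ → ℕ → ℕ, IsStdTableau lam τ ∧ ∀ i ≤ N, ∀ p : ℕ,
      Module.finrank 𝕜 ↥(F i ⊓ LinearMap.ker (e ^ p)) = entriesInCols lam τ i p) ∧
    (∀ τ τ' : ℕ → ℕ → ℕ, IsStdTableau lam τ → IsStdTableau lam τ' →
      (∀ i ≤ N, ∀ p : ℕ,
        Module.finrank 𝕜 ↥(F i ⊓ LinearMap.ker (e ^ p)) = entriesInCols lam τ i p) →
      (∀ i ≤ N, ∀ p : ℕ,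
        Module.finrank 𝕜 ↥(F i ⊓ LinearMap.ker (e ^ p)) = entriesInCols lam τ' i p) →
      ∀ r c, r < lam.length → c < lam.getD r 0 → τ r c = τ' r c) := by
  classical
  obtain ⟨n, hn⟩ := henil
  set D : ℕ → ℕ → ℕ :=
    fun i p => Module.finrank 𝕜 ↥(F i ⊓ LinearMap.ker (e ^ p)) with hDdef
  have hker0 : LinearMap.ker (e ^ 0) = (⊥ : Submodule 𝕜 V) := by
    rw [pow_zero, Module.End.one_eq_id, LinearMap.ker_id]
  have hDi0 : ∀ i, D i 0 = 0 := by
    intro i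
    show Module.finrank 𝕜 ↥(F i ⊓ LinearMap.ker (e ^ 0)) = 0
    rw [hker0, inf_bot_eq, finrank_bot]
  have hD0 : ∀ p, D 0 p = 0 := by
    intro p
    show Module.finrank 𝕜 ↥(F 0 ⊓ LinearMap.ker (e ^ p)) = 0
    rw [hF.bot, bot_inf_eq, finrank_bot]
  have hkertop : LinearMap.ker (e ^ (n + 1)) = (⊤ : Submodule 𝕜 V) := by
    have h0 : e ^ (n + 1) = 0 := by rw [pow_succ, hn, zero_mul]
    rw [h0, LinearMap.ker_zero]
  have hDtop : ∀ a, a ≤ N → D a (n + 1) = a := by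
    intro a ha
    show Module.finrank 𝕜 ↥(F a ⊓ LinearMap.ker (e ^ (n + 1))) = a
    rw [hkertop, inf_top_eq, hF.dim a ha]
  have hmonoi : ∀ i i' p, i ≤ i' → D i p ≤ D i' p := fun i i' p h =>
    Submodule.finrank_mono (inf_le_inf_right _ (hF.mono h))
  have hestab : ∀ i, Submodule.map e (F i) ≤ F i := by
    intro i
    cases i with
    | zero => rw [hF.bot, Submodule.map_bot]
    | succ j => exact le_trans (hspringer j) (hF.mono (Nat.le_succ j))
  set col : ℕ → ℕ := fun a => sInf {p | D (a - 1) (p + 1) < D a (p + 1)} with hcoldef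
  have hex : ∀ a, 1 ≤ a → a ≤ N → n ∈ {p | D (a - 1) (p + 1) < D a (p + 1)} := by
    intro a h1 h2
    simp only [Set.mem_setOf_eq]
    rw [hDtop a h2, hDtop (a - 1) (by omega)]
    omega
  have hjump : ∀ a, 1 ≤ a → a ≤ N → D (a - 1) (col a + 1) < D a (col a + 1) :=
    fun a h1 h2 => Nat.sInf_mem ⟨n, hex a h1 h2⟩
  have hcoliff : ∀ a, 1 ≤ a → a ≤ N → ∀ p, (col a < p ↔ D (a - 1) p < D a p) := by
    intro a h1 h2 p
    constructor
    · intro hp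
      exact aux_L2 (hF.mono (show a - 1 ≤ a by omega))
        (aux_ker_pow_mono e (show col a + 1 ≤ p by omega)) (hjump a h1 h2)
    · intro hp
      rcases Nat.eq_zero_or_pos p with rfl | hppos
      · rw [hDi0, hDi0] at hp; omega
      · have hmem : p - 1 ∈ {q | D (a - 1) (q + 1) < D a (q + 1)} := by
          simp only [Set.mem_setOf_eq]
          have hq : p - 1 + 1 = p := by omega
          rw [hq]; exact hp
        have h2 : col a ≤ p - 1 := Nat.sInf_le hmem
        omega
  have hstep : ∀ a, 1 ≤ a → a ≤ N → ∀ p,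
      D a p = D (a - 1) p + (if col a < p then 1 else 0) := by
    intro a h1 h2 p
    have hub : D a p ≤ D (a - 1) p + 1 := by
      apply aux_L1 (hF.mono (show a - 1 ≤ a by omega))
      rw [hF.dim a h2, hF.dim (a - 1) (by omega)]
      omega
    have hlb := hmonoi (a - 1) a p (by omega)
    by_cases hc : col a < p
    · have := (hcoliff a h1 h2 p).mp hc
      rw [if_pos hc]; omega
    · have hnot : ¬ (D (a - 1) p < D a p) := fun hlt => hc ((hcoliff a h1 h2 p).mpr hlt)
      rw [if_neg hc]; omega
  have hP1 : ∀ i, i ≤ N → ∀ p, D i p = ((Finset.Icc 1 i).filter fun a => col a < p).card := by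
    intro i
    induction i with
    | zero => intro _ p; rw [hD0]; simp
    | succ j ih =>
      intro hj p
      have hr := hstep (j + 1) (by omega) hj p
      rw [hr, aux_card_succ _ (j + 1) (by omega)]
      have hj1 : j + 1 - 1 = j := rfl
      rw [hj1, ih (by omega) p]
  have hsplit : ∀ i, i ≤ N → ∀ c,
      ((Finset.Icc 1 i).filter fun a => col a = c).card + D i c = D i (c + 1) := by
    intro i hi c
    rw [hP1 i hi c, hP1 i hi (c + 1)]
    have hun : (Finset.Icc 1 i).filter (fun a => col a < c + 1) =
        ((Finset.Icc 1 i).filter fun a => col a < c) ∪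
          ((Finset.Icc 1 i).filter fun a => col a = c) := by
      rw [← Finset.filter_or]
      apply Finset.filter_congr
      intro x _
      constructor <;> intro h <;> omega
    rw [hun, Finset.card_union_of_disjoint]
    · omega
    · rw [Finset.disjoint_filter]
      intro x _ hx hx'
      omega
  have hshape : ∀ i, i ≤ N → ∀ c : ℕ,
      ((Finset.Icc 1 i).filter fun a => col a = c + 1).card ≤
        ((Finset.Icc 1 i).filter fun a => col a = c).card := by
    intro i hi c
    have hcv : D i (c + 1 + 1) + D i c ≤ 2 * D i (c + 1) := aux_concave e (hestab i) c
    have e1 := hsplit i hi c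
    have e2 := hsplit i hi (c + 1)
    omega
  have hfinal : ∀ c : ℕ, ((Finset.Icc 1 N).filter fun a => col a = c).card =
      ((Finset.range lam.length).filter fun j => c < lam.getD j 0).card := by
    intro c
    have hDN : ∀ p, D N p = ∑ j ∈ Finset.range lam.length, min p (lam.getD j 0) := by
      intro p
      show Module.finrank 𝕜 ↥(F N ⊓ LinearMap.ker (e ^ p)) = _
      rw [hF.top, top_inf_eq, htype p]
    have e1 := hsplit N (le_refl N) c
    have e2 : ∑ j ∈ Finset.range lam.length, min (c + 1) (lam.getD j 0) =
        ∑ j ∈ Finset.range lam.length, min c (lam.getD j 0) +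
          ((Finset.range lam.length).filter fun j => c < lam.getD j 0).card := by
      rw [Finset.card_filter, ← Finset.sum_add_distrib]
      apply Finset.sum_congr rfl
      intro j _
      by_cases h : c < lam.getD j 0
      · rw [if_pos h]; omega
      · rw [if_neg h]; omega
    rw [hDN c, hDN (c + 1)] at e1
    omega
  obtain ⟨τ, hτstd, hτcnt⟩ := aux_comb N lam hlam hsum col hshape hfinal
  constructor
  · refine ⟨τ, hτstd, fun i hi p => ?_⟩
    rw [hτcnt i hi p, ← hP1 i hi p]
  · intro σ σ' hσ hσ' hcount hcount'
    obtain ⟨cl, rw1, hb, hcc, hrr⟩ := aux_std_count N lam hlam hsum σ hσ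
    obtain ⟨cl', rw1', hb', hcc', hrr'⟩ := aux_std_count N lam hlam hsum σ' hσ'
    have hcnt : ∀ i, i ≤ N → ∀ p, ((Finset.Icc 1 i).filter fun a => cl a < p).card =
        ((Finset.Icc 1 i).filter fun a => cl' a < p).card := by
      intro i hi p
      rw [← hcc i hi p, ← hcc' i hi p, ← hcount i hi p, ← hcount' i hi p]
    have hcleq : ∀ a, 1 ≤ a → a ≤ N → cl a = cl' a := by
      intro a h1 h2
      have key : ∀ p, (cl a < p ↔ cl' a < p) := by
        intro p
        have e1 := hcnt a h2 p
        have e2 := hcnt (a - 1) (by omega) p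
        have d1 : ((Finset.Icc 1 a).filter fun x => cl x < p).card =
            ((Finset.Icc 1 (a - 1)).filter fun x => cl x < p).card +
              (if cl a < p then 1 else 0) := aux_card_succ _ a h1
        have d2 : ((Finset.Icc 1 a).filter fun x => cl' x < p).card =
            ((Finset.Icc 1 (a - 1)).filter fun x => cl' x < p).card +
              (if cl' a < p then 1 else 0) := aux_card_succ _ a h1
        constructor
        · intro hx
          by_contra hy
          rw [if_pos hx] at d1
          rw [if_neg hy] at d2
          omega
        · intro hy
          by_contra hx
          rw [if_neg hx] at d1
          rw [if_pos hy] at d2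
          omega
      have k1 := (key (cl a + 1)).mp (by omega)
      have k2 := (key (cl' a + 1)).mpr (by omega)
      omega
    have hrweq : ∀ a, 1 ≤ a → a ≤ N → rw1 a = rw1' a := by
      intro a h1 h2
      rw [hrr a h1 h2, hrr' a h1 h2]
      apply Finset.card_nbij id
      · intro x hx
        simp only [Finset.mem_coe, Finset.mem_filter, Finset.mem_Icc] at hx ⊢
        refine ⟨hx.1, ?_⟩
        rw [id, ← hcleq x hx.1.1 (by omega), ← hcleq a h1 h2]
        exact hx.2
      · intro x hx y hy hxy
        exact hxy
      · intro x hx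
        simp only [Finset.coe_filter, Finset.mem_Icc, Set.mem_setOf_eq, Set.mem_image] at hx ⊢
        refine ⟨x, ⟨hx.1, ?_⟩, rfl⟩
        rw [hcleq x hx.1.1 (by omega), hcleq a h1 h2]
        exact hx.2
    intro r c hrlen hclt
    have ha := hσ.entry_mem r c hrlen hclt
    have ha2 : σ r c ≤ N := by rw [← hsum]; exact ha.2
    obtain ⟨b1, b2, b3⟩ := hb (σ r c) ha.1 ha2
    obtain ⟨req, ceq⟩ := hσ.inj r c (rw1 (σ r c)) (cl (σ r c)) hrlen hclt b1 b2 b3.symm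
    obtain ⟨b1', b2', b3'⟩ := hb' (σ r c) ha.1 ha2
    have hre : rw1' (σ r c) = r := by rw [← hrweq (σ r c) ha.1 ha2, ← req]
    have hce : cl' (σ r c) = c := by rw [← hcleq (σ r c) ha.1 ha2, ← ceq]
    calc σ r c = σ' (rw1' (σ r c)) (cl' (σ r c)) := b3'.symm
      _ = σ' r c := by rw [hre, hce]
end

section
/- The Spaltenstein map is surjective: let e be a nilpotent endomorphism of an N-dimensional 𝕜-vector space V of Jordan type λ ⊢ N. Then for every standard tableau τ ∈ Std(λ) there exists a full flag F_• of V with e(F_i) ⊆ F_{i-1} for all i ≥ 1 and Φ(F_•) = τ. -/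
section Aux
open Submodule LinearMap Module


section Lin
variable {𝕜 V : Type*} [Field 𝕜] [AddCommGroup V] [Module 𝕜 V] [FiniteDimensional 𝕜 V]

lemma ker_pow_mono (e : V →ₗ[𝕜] V) {p q : ℕ} (h : p ≤ q) : ker (e ^ p) ≤ ker (e ^ q) := by
  intro x hx
  rw [LinearMap.mem_ker] at *
  have hq : e ^ q = e ^ (q - p) * e ^ p := by rw [← pow_add]; congr 1; omega
  rw [hq, Module.End.mul_apply, hx, map_zero]

lemma range_inf_ker (e : V →ₗ[𝕜] V) (p : ℕ) :
    range e ⊓ ker (e ^ p) = map e (ker (e ^ (p + 1))) := by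
  ext x
  simp only [Submodule.mem_inf, LinearMap.mem_range, LinearMap.mem_ker, Submodule.mem_map]
  constructor
  · rintro ⟨⟨y, rfl⟩, hx⟩
    exact ⟨y, by rw [pow_succ, Module.End.mul_apply]; exact hx, rfl⟩
  · rintro ⟨y, hy, rfl⟩
    rw [pow_succ, Module.End.mul_apply] at hy
    exact ⟨⟨y, rfl⟩, hy⟩

lemma finrank_map_add (f : V →ₗ[𝕜] V) (A : Submodule 𝕜 V) :
    finrank 𝕜 (map f A) + finrank 𝕜 ↥(A ⊓ ker f) = finrank 𝕜 A := by
  have h := finrank_range_add_finrank_ker (f.domRestrict A)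
  rw [range_domRestrict] at h
  have hker : ker (f.domRestrict A) = comap A.subtype (ker f) := by
    ext x; simp [LinearMap.mem_ker]
  rw [hker] at h
  rw [← h]
  congr 1
  rw [← Submodule.finrank_map_subtype_eq A (comap A.subtype (ker f)), map_comap_subtype,
    inf_comm]

/-- `dim (range e ⊔ ker e^p) + dim ker e^{p+1} = dim V + dim ker e^p`. -/
lemma finrank_sup_range_ker (e : V →ₗ[𝕜] V) (p : ℕ) :
    finrank 𝕜 ↥(range e ⊔ ker (e ^ p)) + finrank 𝕜 (ker (e ^ (p + 1))) =
      finrank 𝕜 V + finrank 𝕜 (ker (e ^ p)) := by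
  have h1 := Submodule.finrank_sup_add_finrank_inf_eq (range e) (ker (e ^ p))
  rw [range_inf_ker] at h1
  have h2 := finrank_map_add e (ker (e ^ (p + 1)))
  have h3 : ker (e ^ (p + 1)) ⊓ ker e = ker e := by
    rw [inf_eq_right]
    simpa using ker_pow_mono e (by omega : 1 ≤ p + 1)
  rw [h3] at h2
  have h4 := finrank_range_add_finrank_ker e
  omega

lemma exists_hyperplane (A B : Submodule 𝕜 V) (h : ¬ B ≤ A) :
    ∃ (W : Submodule 𝕜 V) (v : V), A ≤ W ∧ v ∈ B ∧ v ∉ W ∧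
      finrank 𝕜 W + 1 = finrank 𝕜 V ∧
      ∀ K : Submodule 𝕜 V, v ∈ K → finrank 𝕜 ↥(W ⊓ K) + 1 = finrank 𝕜 K := by
  rw [SetLike.not_le_iff_exists] at h
  obtain ⟨v, hvB, hvA⟩ := h
  obtain ⟨C, hC⟩ := Submodule.exists_isCompl (A ⊔ span 𝕜 {v})
  have hvne : v ≠ 0 := fun h0 => hvA (h0 ▸ A.zero_mem)
  have hvW : v ∉ A ⊔ C := by
    intro hv
    rw [Submodule.mem_sup] at hv
    obtain ⟨a, ha, c, hc, hac⟩ := hv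
    have hcm : c ∈ (A ⊔ span 𝕜 {v}) ⊓ C := by
      refine ⟨?_, hc⟩
      have hce : c = v - a := by rw [← hac]; abel
      rw [hce]
      exact sub_mem (Submodule.mem_sup_right (Submodule.mem_span_singleton_self v))
        (Submodule.mem_sup_left ha)
    rw [hC.inf_eq_bot, Submodule.mem_bot] at hcm
    subst hcm
    rw [add_zero] at hac
    exact hvA (hac ▸ ha)
  have hsup : (A ⊔ C) ⊔ span 𝕜 {v} = ⊤ := by
    rw [sup_assoc, sup_comm C, ← sup_assoc]
    exact hC.sup_eq_top
  have hinf : (A ⊔ C) ⊓ span 𝕜 {v} = ⊥ := by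
    rw [eq_bot_iff]
    intro x hx
    obtain ⟨hxW, hxv⟩ := Submodule.mem_inf.mp hx
    rw [Submodule.mem_span_singleton] at hxv
    obtain ⟨a, rfl⟩ := hxv
    rcases eq_or_ne a 0 with rfl | ha
    · simp
    · exact absurd (by simpa [ha, smul_smul] using (A ⊔ C).smul_mem a⁻¹ hxW) hvW
  have hrankW : finrank 𝕜 ↥(A ⊔ C) + 1 = finrank 𝕜 V := by
    have h5 := Submodule.finrank_sup_add_finrank_inf_eq (A ⊔ C) (span 𝕜 {v})
    rw [hsup, hinf, finrank_span_singleton hvne, finrank_bot, finrank_top] at h5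
    omega
  refine ⟨A ⊔ C, v, le_sup_left, hvB, hvW, hrankW, ?_⟩
  intro K hvK
  have hsupK : (A ⊔ C) ⊔ K = ⊤ := by
    rw [eq_top_iff, ← hsup]
    exact sup_le_sup_left (span_le.mpr (by simpa using hvK)) _
  have h6 := Submodule.finrank_sup_add_finrank_inf_eq (A ⊔ C) K
  rw [hsupK, finrank_top] at h6
  omega

omit [FiniteDimensional 𝕜 V] in
lemma map_subtype_inf (W : Submodule 𝕜 V) (A : Submodule 𝕜 ↥W) (B : Submodule 𝕜 V) :
    map W.subtype A ⊓ B = map W.subtype (A ⊓ comap W.subtype B) := by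
  ext x
  simp only [Submodule.mem_inf, Submodule.mem_map, Submodule.mem_comap]
  constructor
  · rintro ⟨⟨y, hy, rfl⟩, hb⟩
    exact ⟨y, ⟨hy, hb⟩, rfl⟩
  · rintro ⟨y, ⟨hy, hb⟩, rfl⟩
    exact ⟨⟨y, hy, rfl⟩, hb⟩

end Lin

lemma getD_eq_getElem' (l : List ℕ) {j : ℕ} (h : j < l.length) : l.getD j 0 = l[j] :=
  List.getD_eq_getElem l 0 h

/-- shape facts for removing the corner box `(r, c)`. -/
lemma shape_facts (lam : List ℕ) (r c : ℕ) (hlam : IsPartitionL lam) (hr : r < lam.length)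
    (hc : lam.getD r 0 = c + 1) (hnext : r + 1 < lam.length → lam.getD (r + 1) 0 ≤ c) :
    ∃ lam' : List ℕ, IsPartitionL lam' ∧ lam'.sum + 1 = lam.sum ∧
      (∀ r' c', (r' < lam'.length ∧ c' < lam'.getD r' 0) ↔
        (r' < lam.length ∧ c' < lam.getD r' 0 ∧ ¬(r' = r ∧ c' = c))) ∧
      (∀ p, (∑ j ∈ Finset.range lam'.length, min p (lam'.getD j 0)) + (if c < p then 1 else 0) =
        ∑ j ∈ Finset.range lam.length, min p (lam.getD j 0)) := by
  have hsorted := hlam.1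
  have hpos := hlam.2
  have hget : ∀ i j (hi : i ≤ j) (hj : j < lam.length), lam[j] ≤ lam[i] := by
    intro i j hi hj
    rcases eq_or_lt_of_le hi with rfl | hij
    · exact le_refl _
    · exact List.pairwise_iff_getElem.mp hsorted i j (by omega) hj hij
  rcases Nat.eq_zero_or_pos c with rfl | hcpos
  · -- c = 0 : row r has length 1, so r is the last row; lam' = lam.dropLast
    have hrlast : r + 1 = lam.length := by
      by_contra hne
      have h1 : r + 1 < lam.length := by omega
      have h2 := hnext h1
      have h3 : 0 < lam.getD (r + 1) 0 := by
        rw [getD_eq_getElem' _ h1]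
        exact hpos _ (List.getElem_mem h1)
      omega
    have hnil : lam ≠ [] := by intro h; rw [h] at hr; simp at hr
    have hlen' : lam.dropLast.length = r := by rw [List.length_dropLast]; omega
    have hgetD' : ∀ j, j < r → lam.dropLast.getD j 0 = lam.getD j 0 := by
      intro j hj
      rw [getD_eq_getElem' _ (by omega : j < lam.length),
        getD_eq_getElem' _ (by rw [hlen']; omega)]
      exact List.getElem_dropLast _
    refine ⟨lam.dropLast, ⟨hsorted.sublist (List.dropLast_sublist lam),
      fun x hx => hpos x (List.mem_of_mem_dropLast hx)⟩, ?_, ?_, ?_⟩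
    · -- sum
      have h1 : lam.dropLast ++ [lam.getLast hnil] = lam := List.dropLast_append_getLast hnil
      have h2 : lam.getLast hnil = lam[r] := by
        rw [List.getLast_eq_getElem]; congr 1; omega
      have h3 : lam[r] = 1 := by rw [← getD_eq_getElem' _ hr, hc]
      calc lam.dropLast.sum + 1 = (lam.dropLast ++ [lam.getLast hnil]).sum := by
            rw [List.sum_append, h2, h3]; simp
        _ = lam.sum := by rw [h1]
    · -- box iff
      intro r' c'
      rw [hlen']
      constructor
      · rintro ⟨hr', hc'⟩
        rw [hgetD' r' hr'] at hc'
        exact ⟨by omega, hc', by omega⟩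
      · rintro ⟨hr', hc', hne⟩
        have hr'r : r' ≤ r := by omega
        rcases eq_or_lt_of_le hr'r with rfl | hlt
        · rw [hc] at hc'; omega
        · exact ⟨hlt, by rw [hgetD' r' hlt]; exact hc'⟩
    · -- sums of mins
      intro p
      have hrange : Finset.range lam.length = Finset.range (r + 1) := by rw [hrlast]
      rw [hrange, Finset.sum_range_succ, hlen']
      have h1 : min p (lam.getD r 0) = min p 1 := by rw [hc]
      have h2 : ∀ j ∈ Finset.range r, min p (lam.dropLast.getD j 0) = min p (lam.getD j 0) := by
        intro j hj
        rw [hgetD' j (Finset.mem_range.mp hj)]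
      rw [Finset.sum_congr rfl h2, h1]
      rcases Nat.eq_zero_or_pos p with rfl | hp
      · simp
      · have : min p 1 = 1 := by omega
        rw [this]
        simp only [hp, if_pos]
  · -- c > 0 : lam' = lam.set r c
    have hgetD' : ∀ j, j < lam.length →
        (lam.set r c).getD j 0 = if j = r then c else lam.getD j 0 := by
      intro j hj
      rw [getD_eq_getElem' _ (by rw [List.length_set]; exact hj),
        List.getElem_set]
      rcases eq_or_ne j r with rfl | h
      · simp
      · rw [if_neg (Ne.symm h), if_neg h, getD_eq_getElem' _ hj]
    have hlen' : (lam.set r c).length = lam.length := List.length_set ..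
    refine ⟨lam.set r c, ⟨?_, ?_⟩, ?_, ?_, ?_⟩
    · -- sorted
      rw [List.pairwise_iff_getElem]
      intro i j hi hj hij
      rw [hlen'] at hi hj
      have hgi : (lam.set r c)[i]'(by rw [hlen']; exact hi) = if i = r then c else lam[i] := by
        rw [List.getElem_set]
        rcases eq_or_ne i r with rfl | h
        · simp
        · rw [if_neg (Ne.symm h), if_neg h]
      have hgj : (lam.set r c)[j]'(by rw [hlen']; exact hj) = if j = r then c else lam[j] := by
        rw [List.getElem_set]
        rcases eq_or_ne j r with rfl | h
        · simp
        · rw [if_neg (Ne.symm h), if_neg h]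
      simp only [ge_iff_le]
      rw [hgi, hgj]
      have hcr : lam[r] = c + 1 := by rw [← getD_eq_getElem' _ hr, hc]
      rcases eq_or_ne i r with h1 | h1 <;> rcases eq_or_ne j r with h2 | h2
      · omega
      · rw [if_pos h1, if_neg h2]
        have hj1 : r + 1 ≤ j := by omega
        have hj2 : r + 1 < lam.length := by omega
        have h3 := hnext hj2
        rw [getD_eq_getElem' _ hj2] at h3
        have h4 := hget (r+1) j hj1 hj
        omega
      · rw [if_neg h1, if_pos h2]
        have h5 := hget i r (by omega) hr
        omega
      · rw [if_neg h1, if_neg h2]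
        exact hget i j (by omega) hj
    · -- positive
      intro x hx
      rcases List.mem_or_eq_of_mem_set hx with h | rfl
      · exact hpos x h
      · exact hcpos
    · -- sum
      rw [List.sum_set]
      have hsplit : lam.sum = (lam.take r).sum + (lam[r] + (lam.drop (r+1)).sum) := by
        conv_lhs => rw [← List.take_append_drop r lam]
        rw [List.sum_append, List.drop_eq_getElem_cons hr, List.sum_cons]
      have hcr : lam[r] = c + 1 := by rw [← getD_eq_getElem' _ hr, hc]
      rw [if_pos hr]
      omega
    · -- box iff
      intro r' c'
      rw [hlen']
      constructor
      · rintro ⟨hr', hc'⟩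
        rw [hgetD' r' hr'] at hc'
        rcases eq_or_ne r' r with rfl | h
        · rw [if_pos rfl] at hc'
          exact ⟨hr', by rw [hc]; omega, by omega⟩
        · rw [if_neg h] at hc'
          exact ⟨hr', hc', by omega⟩
      · rintro ⟨hr', hc', hne⟩
        refine ⟨hr', ?_⟩
        rw [hgetD' r' hr']
        split
        · next h => subst h; rw [hc] at hc'; omega
        · exact hc'
    · -- sums of mins
      intro p
      rw [hlen']
      rw [← Finset.sum_erase_add _ _ (Finset.mem_range.mpr hr),
        ← Finset.sum_erase_add _ (fun j => min p (lam.getD j 0)) (Finset.mem_range.mpr hr)]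
      have h2 : ∀ j ∈ (Finset.range lam.length).erase r,
          min p ((lam.set r c).getD j 0) = min p (lam.getD j 0) := by
        intro j hj
        obtain ⟨hjr, hjm⟩ := Finset.mem_erase.mp hj
        rw [hgetD' j (Finset.mem_range.mp hjm), if_neg hjr]
      rw [Finset.sum_congr rfl h2, hgetD' r hr, if_pos rfl, hc]
      split <;> omega

lemma entriesInCols_zero (lam : List ℕ) (τ : ℕ → ℕ → ℕ) (p : ℕ) :
    entriesInCols lam τ 0 p = 0 := by
  unfold entriesInCols
  convert Set.ncard_empty ℕ
  ext a
  simp only [Set.mem_setOf_eq, Set.mem_empty_iff_false, iff_false]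
  rintro ⟨h1, h2, -⟩
  omega

lemma entriesInCols_total (lam : List ℕ) (τ : ℕ → ℕ → ℕ) (hτ : IsStdTableau lam τ) (p : ℕ) :
    entriesInCols lam τ lam.sum p = ∑ j ∈ Finset.range lam.length, min p (lam.getD j 0) := by
  classical
  set S : Finset ((_ : ℕ) × ℕ) :=
    (Finset.range lam.length).sigma (fun r => Finset.range (min p (lam.getD r 0))) with hS
  have hset : {a : ℕ | 1 ≤ a ∧ a ≤ lam.sum ∧
      ∃ r c, r < lam.length ∧ c < lam.getD r 0 ∧ c < p ∧ τ r c = a} =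
      ↑(S.image fun x => τ x.1 x.2) := by
    ext a
    simp only [Set.mem_setOf_eq, Finset.coe_image, Set.mem_image, Finset.mem_coe,
      Finset.mem_sigma, Finset.mem_range, hS]
    constructor
    · rintro ⟨h1, h2, r, c, hr, hc, hcp, rfl⟩
      exact ⟨⟨r, c⟩, ⟨hr, show c < min p (lam.getD r 0) by omega⟩, rfl⟩
    · rintro ⟨⟨r, c⟩, ⟨hr, hc⟩, rfl⟩
      have hc0 : c < min p (lam.getD r 0) := hc
      have hc1 : c < lam.getD r 0 := by omega
      have hc2 : c < p := by omega
      obtain ⟨h1, h2⟩ := hτ.entry_mem r c hr hc1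
      exact ⟨h1, h2, r, c, hr, hc1, hc2, rfl⟩
  unfold entriesInCols
  rw [hset, Set.ncard_coe_finset, Finset.card_image_of_injOn, Finset.card_sigma]
  · simp
  · rintro ⟨r, c⟩ hrc ⟨r', c'⟩ hrc' heq
    have ha1 : r < lam.length := Finset.mem_range.mp (Finset.mem_sigma.mp hrc).1
    have ha2 : c < min p (lam.getD r 0) := Finset.mem_range.mp (Finset.mem_sigma.mp hrc).2
    have hb1 : r' < lam.length := Finset.mem_range.mp (Finset.mem_sigma.mp hrc').1
    have hb2 : c' < min p (lam.getD r' 0) := Finset.mem_range.mp (Finset.mem_sigma.mp hrc').2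
    obtain ⟨h1, h2⟩ := hτ.inj r c r' c' ha1 (by omega) hb1 (by omega) heq
    subst h1; subst h2; rfl

lemma entriesInCols_removal (lam lam' : List ℕ) (τ : ℕ → ℕ → ℕ) (r c : ℕ)
    (hbox : ∀ r' c', (r' < lam'.length ∧ c' < lam'.getD r' 0) ↔
        (r' < lam.length ∧ c' < lam.getD r' 0 ∧ ¬(r' = r ∧ c' = c)))
    (hval : τ r c = lam.sum) (i p : ℕ) (hi : i < lam.sum) :
    entriesInCols lam' τ i p = entriesInCols lam τ i p := by
  unfold entriesInCols
  congr 1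
  ext a
  simp only [Set.mem_setOf_eq]
  constructor
  · rintro ⟨h1, h2, r', c', hr', hc', hcp, rfl⟩
    obtain ⟨g1, g2, -⟩ := (hbox r' c').mp ⟨hr', hc'⟩
    exact ⟨h1, h2, r', c', g1, g2, hcp, rfl⟩
  · rintro ⟨h1, h2, r', c', hr', hc', hcp, rfl⟩
    have hne : ¬(r' = r ∧ c' = c) := by
      rintro ⟨rfl, rfl⟩
      omega
    obtain ⟨g1, g2⟩ := (hbox r' c').mpr ⟨hr', hc', hne⟩
    exact ⟨h1, h2, r', c', g1, g2, hcp, rfl⟩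


universe uu vv

theorem spalt_aux (N : ℕ) : ∀ {𝕜 : Type uu} {V : Type vv} [Field 𝕜] [AddCommGroup V]
    [Module 𝕜 V] [FiniteDimensional 𝕜 V] (lam : List ℕ), IsPartitionL lam → lam.sum = N →
    finrank 𝕜 V = N → ∀ (e : V →ₗ[𝕜] V),
    (∀ p : ℕ, finrank 𝕜 ↥(ker (e ^ p)) =
      ∑ j ∈ Finset.range lam.length, min p (lam.getD j 0)) →
    ∀ (τ : ℕ → ℕ → ℕ), IsStdTableau lam τ →
    ∃ F : ℕ → Submodule 𝕜 V, IsFullFlag N F ∧ (∀ i, Submodule.map e (F (i + 1)) ≤ F i) ∧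
      ∀ i ≤ N, ∀ p : ℕ, finrank 𝕜 ↥(F i ⊓ ker (e ^ p)) = entriesInCols lam τ i p := by
  induction N using Nat.strong_induction_on with
  | _ N IH =>
  intro 𝕜 V _ _ _ _ lam hlam hsum hdim e htype τ hτ
  rcases N with _ | N'
  · -- base case N = 0
    have hsub : Subsingleton V := Module.finrank_zero_iff.mp hdim
    have hbt : (⊥ : Submodule 𝕜 V) = ⊤ := by
      rw [eq_top_iff]
      intro x _
      rw [Subsingleton.elim x 0]
      exact Submodule.zero_mem _
    refine ⟨fun _ => ⊥, ⟨monotone_const, rfl, hbt, ?_⟩, ?_, ?_⟩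
    · intro i hi
      rw [Nat.le_zero.mp hi]
      exact finrank_bot 𝕜 V
    · intro i
      rw [Submodule.map_bot]
    · intro i hi p
      rw [Nat.le_zero.mp hi, bot_inf_eq, entriesInCols_zero]
      exact finrank_bot 𝕜 V
  · -- inductive step, N = N' + 1
    obtain ⟨r, c, hr, hcb, hval⟩ := hτ.exists_box lam.sum (by omega) le_rfl
    have hc : lam.getD r 0 = c + 1 := by
      by_contra h
      have h1 : c + 1 < lam.getD r 0 := by omega
      have h2 := hτ.row_lt r c (c + 1) hr (by omega) h1
      have h3 := (hτ.entry_mem r (c + 1) hr h1).2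
      omega
    have hnext : r + 1 < lam.length → lam.getD (r + 1) 0 ≤ c := by
      intro h1
      by_contra h2
      have h3 := hτ.col_lt r (r + 1) c (by omega) h1 (by omega)
      have h4 := (hτ.entry_mem (r + 1) c h1 (by omega)).2
      omega
    obtain ⟨lam', hlam', hsum', hbox, hmins⟩ := shape_facts lam r c hlam hr hc hnext
    -- the tableau restricts to lam'
    have hτ' : IsStdTableau lam' τ := by
      constructor
      · intro r' c' h1 h2
        obtain ⟨g1, g2, g3⟩ := (hbox r' c').mp ⟨h1, h2⟩
        obtain ⟨m1, m2⟩ := hτ.entry_mem r' c' g1 g2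
        refine ⟨m1, ?_⟩
        have hne : τ r' c' ≠ lam.sum := by
          intro hEq
          obtain ⟨e1, e2⟩ := hτ.inj r' c' r c g1 g2 hr hcb (hEq.trans hval.symm)
          exact g3 ⟨e1, e2⟩
        omega
      · intro a ha1 ha2
        obtain ⟨r', c', g1, g2, g3⟩ := hτ.exists_box a ha1 (by omega)
        have hne : ¬(r' = r ∧ c' = c) := by
          rintro ⟨rfl, rfl⟩
          rw [hval] at g3
          omega
        obtain ⟨k1, k2⟩ := (hbox r' c').mpr ⟨g1, g2, hne⟩
        exact ⟨r', c', k1, k2, g3⟩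
      · intro r1 c1 r2 c2 h1 h2 h3 h4 heq
        obtain ⟨g1, g2, -⟩ := (hbox r1 c1).mp ⟨h1, h2⟩
        obtain ⟨g3, g4, -⟩ := (hbox r2 c2).mp ⟨h3, h4⟩
        exact hτ.inj r1 c1 r2 c2 g1 g2 g3 g4 heq
      · intro r1 c1 c2 h1 h2 h3
        obtain ⟨g1, g2, -⟩ := (hbox r1 c2).mp ⟨h1, h3⟩
        exact hτ.row_lt r1 c1 c2 g1 h2 g2
      · intro r1 r2 c1 h1 h2 h3
        obtain ⟨g1, g2, -⟩ := (hbox r2 c1).mp ⟨h2, h3⟩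
        exact hτ.col_lt r1 r2 c1 h1 g1 g2
    -- the hyperplane W
    have hnle : ¬ (ker (e ^ (c + 1)) ≤ range e ⊔ ker (e ^ c)) := by
      intro hle
      have hle2 : range e ⊔ ker (e ^ (c + 1)) ≤ range e ⊔ ker (e ^ c) :=
        sup_le le_sup_left hle
      have h1 := finrank_sup_range_ker e c
      have h2 := finrank_sup_range_ker e (c + 1)
      have h3 := Submodule.finrank_mono hle2
      have h4 : finrank 𝕜 (ker (e ^ c)) + finrank 𝕜 (ker (e ^ (c + 1 + 1))) <
          2 * finrank 𝕜 (ker (e ^ (c + 1))) := by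
        rw [htype, htype, htype, ← Finset.sum_add_distrib, Finset.mul_sum]
        refine Finset.sum_lt_sum (fun j _ => by omega) ⟨r, Finset.mem_range.mpr hr, ?_⟩
        rw [hc]
        omega
      omega
    obtain ⟨W, v, hUW, hvK, hvW, hrkW, hWinf⟩ :=
      exists_hyperplane (range e ⊔ ker (e ^ c)) (ker (e ^ (c + 1))) hnle
    have hrange : range e ≤ W := le_trans le_sup_left hUW
    have hstab : ∀ x ∈ W, e x ∈ W := fun x _ => hrange (LinearMap.mem_range_self e x)
    set eW := e.restrict hstab with heW
    have hdimW : finrank 𝕜 W = N' := by omega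
    have hkerW : ∀ p, ker (eW ^ p) = Submodule.comap W.subtype (ker (e ^ p)) := by
      intro p
      rw [heW, Module.End.pow_restrict, LinearMap.ker_restrict]
    have hWker : ∀ p, finrank 𝕜 ↥(W ⊓ ker (e ^ p)) =
        ∑ j ∈ Finset.range lam'.length, min p (lam'.getD j 0) := by
      intro p
      rcases Nat.lt_or_ge c p with hp | hp
      · have h5 := hWinf (ker (e ^ p)) (ker_pow_mono e (by omega : c + 1 ≤ p) hvK)
        have h6 := hmins p
        rw [if_pos hp] at h6
        rw [htype] at h5
        omega
      · have hsub : ker (e ^ p) ≤ W :=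
          le_trans (le_trans (ker_pow_mono e hp) le_sup_right) hUW
        rw [inf_eq_right.mpr hsub, htype]
        have h6 := hmins p
        rw [if_neg (by omega)] at h6
        omega
    have htype' : ∀ p, finrank 𝕜 ↥(ker (eW ^ p)) =
        ∑ j ∈ Finset.range lam'.length, min p (lam'.getD j 0) := by
      intro p
      rw [hkerW p, ← Submodule.finrank_map_subtype_eq, Submodule.map_comap_subtype]
      exact hWker p
    obtain ⟨G, hG, hGe, hGd⟩ := IH N' (by omega) lam' hlam' (by omega) hdimW eW htype' τ hτ'
    set F : ℕ → Submodule 𝕜 V := fun i => if i ≤ N' then Submodule.map W.subtype (G i) else ⊤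
      with hF
    refine ⟨F, ⟨?_, ?_, ?_, ?_⟩, ?_, ?_⟩
    · -- mono
      intro i j hij
      show F i ≤ F j
      rw [hF]; beta_reduce
      by_cases hi : i ≤ N'
      · by_cases hj : j ≤ N'
        · rw [if_pos hi, if_pos hj]
          exact Submodule.map_mono (hG.mono hij)
        · rw [if_pos hi, if_neg hj]
          exact le_top
      · have hj : ¬ j ≤ N' := fun h => hi (le_trans hij h)
        rw [if_neg hi, if_neg hj]
    · -- bot
      show F 0 = ⊥
      rw [hF]; beta_reduce
      rw [if_pos (Nat.zero_le N'), hG.bot, Submodule.map_bot]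
    · -- top
      show F (N' + 1) = ⊤
      rw [hF]; beta_reduce
      rw [if_neg (by omega : ¬ N' + 1 ≤ N')]
    · -- dim
      intro i hi
      show finrank 𝕜 ↥(F i) = i
      rw [hF]; beta_reduce
      by_cases h1 : i ≤ N'
      · rw [if_pos h1, Submodule.finrank_map_subtype_eq]
        exact hG.dim i h1
      · have hiN : i = N' + 1 := by omega
        rw [if_neg h1, finrank_top, hdim, hiN]
    · -- Springer condition
      intro i
      rw [hF]; beta_reduce
      have hcomp : e ∘ₗ W.subtype = W.subtype ∘ₗ eW := LinearMap.ext fun x => rfl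
      by_cases h1 : i + 1 ≤ N'
      · have h0 : i ≤ N' := by omega
        rw [if_pos h1, if_pos h0, ← Submodule.map_comp, hcomp, Submodule.map_comp]
        exact Submodule.map_mono (hGe i)
      · by_cases h2 : i ≤ N'
        · rw [if_neg h1, if_pos h2, Submodule.map_top]
          have hiN : i = N' := by omega
          have hGtop : G i = ⊤ := by rw [hiN, hG.top]
          rw [hGtop, Submodule.map_top, Submodule.range_subtype]
          exact hrange
        · rw [if_neg h1, if_neg h2]
          exact le_top
    · -- Spaltenstein invariant
      intro i hi p
      rw [hF]; beta_reduce
      by_cases h1 : i ≤ N'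
      · rw [if_pos h1, map_subtype_inf, Submodule.finrank_map_subtype_eq, ← hkerW p,
          hGd i h1 p]
        exact entriesInCols_removal lam lam' τ r c hbox hval i p (by omega)
      · have hiN : i = N' + 1 := by omega
        rw [if_neg h1, top_inf_eq, htype, hiN, ← hsum]
        exact (entriesInCols_total lam τ hτ p).symm

end Aux

/-- The Spaltenstein map is surjective: for a nilpotent `e` of Jordan type
`λ ⊢ N` and any standard tableau `τ ∈ Std(λ)`, there is a full flag `F` in the Springer
fibre of `e` with `Φ(F) = τ`. -/
theorem spaltenstein_map_surjective
    {𝕜 V : Type*} [Field 𝕜] [AddCommGroup V] [Module 𝕜 V] [FiniteDimensional 𝕜 V]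
    (N : ℕ) (lam : List ℕ) (hlam : IsPartitionL lam) (hsum : lam.sum = N)
    (hdim : Module.finrank 𝕜 V = N)
    (e : V →ₗ[𝕜] V) (henil : IsNilpotent e)
    (htype : ∀ p : ℕ, Module.finrank 𝕜 ↥(LinearMap.ker (e ^ p)) =
      ∑ j ∈ Finset.range lam.length, min p (lam.getD j 0))
    (τ : ℕ → ℕ → ℕ) (hτ : IsStdTableau lam τ) :
    ∃ F : ℕ → Submodule 𝕜 V, IsFullFlag N F ∧
      (∀ i, Submodule.map e (F (i + 1)) ≤ F i) ∧
      ∀ i ≤ N, ∀ p : ℕ,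
        Module.finrank 𝕜 ↥(F i ⊓ LinearMap.ker (e ^ p)) = entriesInCols lam τ i p := by
  exact spalt_aux N lam hlam hsum hdim e htype τ hτ
end

section
/- Let 𝕜, V = V_1 ⊕ ... ⊕ V_n and W_j be as in the context. The Lusztig–Spaltenstein map on flags is injective, and each input flag can be recovered from the output: if F^{(k)}_• are full flags of V_k and F̄_• = LS(F^{(1)}_•,...,F^{(n)}_•), then for every j ∈ {1,...,n} and every d ∈ {0,...,λ_j}, F^{(j)}_d = F̄_i ∩ V_j where i = λ_1 + ... + λ_{j-1} + d. Consequently, if LS(F^{(1)}_•,...,F^{(n)}_•) = LS(G^{(1)}_•,...,G^{(n)}_•) as flags of V, then F^{(k)}_• = G^{(k)}_• for every k. -/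
section Aux

variable {𝕜 V : Type*} [Field 𝕜] [AddCommGroup V] [Module 𝕜 V]

lemma pSum_mono (lam : ℕ → ℕ) : Monotone (pSum lam) := fun _ _ hab =>
  Finset.sum_le_sum_of_subset (Finset.range_subset_range.2 hab)

lemma pSum_succ (lam : ℕ → ℕ) (j : ℕ) : pSum lam (j + 1) = pSum lam j + lam j :=
  Finset.sum_range_succ _ _

lemma LSidx_eq (n : ℕ) (lam : ℕ → ℕ) (j d : ℕ) (hj : j ≤ n) (hd1 : 1 ≤ d)
    (hd : d ≤ lam j) : LSidx n lam (pSum lam j + d) = j := by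
  rw [LSidx, Nat.findGreatest_eq_iff]
  refine ⟨hj, fun _ => by omega, fun m hm hmn hP => ?_⟩
  have h1 : pSum lam (j + 1) ≤ pSum lam m := pSum_mono lam hm
  rw [pSum_succ] at h1
  omega

lemma LS_recover (n : ℕ) (lam : ℕ → ℕ) (hlam : ∀ k < n, 0 < lam k)
    (Vsub : ℕ → Submodule 𝕜 V) (hdecomp : IsDecomp n lam Vsub)
    (F : ℕ → ℕ → Submodule 𝕜 V) (hF : ∀ k < n, IsFlagOf (Vsub k) (lam k) (F k)) :
    ∀ j < n, ∀ d ≤ lam j,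
      F j d = LSflag n lam Vsub F (pSum lam j + d) ⊓ Vsub j := by
  have hWdisj : ∀ j < n, Disjoint (∑ k ∈ Finset.range j, Vsub k) (Vsub j) := by
    intro j hj
    refine ((hdecomp.indep j hj).mono_right ?_).symm
    refine Finset.sum_le_sum_of_subset ?_
    intro x hx
    simp only [Finset.mem_range] at hx
    simp only [Finset.mem_erase, Finset.mem_range]
    omega
  intro j hj d hd
  rcases Nat.eq_zero_or_pos d with rfl | hd1
  · rw [(hF j hj).bot]
    cases j with
    | zero =>
      have h0 : LSidx n lam (pSum lam 0 + 0) = 0 := by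
        rw [LSidx, Nat.findGreatest_eq_iff]
        refine ⟨Nat.zero_le n, fun h => absurd rfl h, fun m _ _ hP => ?_⟩
        simp [pSum] at hP
      rw [LSflag, h0]
      simp [pSum, (hF 0 hj).bot]
    | succ m =>
      have hm : m < n := by omega
      have hi : pSum lam (m + 1) + 0 = pSum lam m + lam m := by
        rw [add_zero, pSum_succ]
      have hidx : LSidx n lam (pSum lam (m + 1) + 0) = m := by
        rw [hi]; exact LSidx_eq n lam m (lam m) (le_of_lt hm) (hlam m hm) le_rfl
      rw [LSflag, hidx]
      have harg : pSum lam (m + 1) + 0 - pSum lam m = lam m := by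
        rw [hi]; omega
      rw [harg, (hF m hm).top]
      have hsum : (∑ k ∈ Finset.range m, Vsub k) + Vsub m
          = ∑ k ∈ Finset.range (m + 1), Vsub k := (Finset.sum_range_succ _ _).symm
      rw [hsum]
      exact ((hWdisj (m + 1) hj).eq_bot).symm
  · have hidx : LSidx n lam (pSum lam j + d) = j :=
      LSidx_eq n lam j d (le_of_lt hj) hd1 hd
    rw [LSflag, hidx]
    have harg : pSum lam j + d - pSum lam j = d := by omega
    rw [harg, Submodule.add_eq_sup, sup_comm,
      sup_inf_assoc_of_le _ ((hF j hj).le d),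
      (hWdisj j hj).eq_bot, sup_bot_eq]

end Aux

/-- The Lusztig–Spaltenstein map on flags is injective and each input flag
is recovered from the output: `F j d = (LS F) (λ_0 + ... + λ_{j-1} + d) ⊓ V_j`; consequently
if `LS F = LS G` then `F k = G k` for every `k`. -/
theorem LSflag_injective
    {𝕜 V : Type*} [Field 𝕜] [AddCommGroup V] [Module 𝕜 V] [FiniteDimensional 𝕜 V]
    (n : ℕ) (lam : ℕ → ℕ) (hlam : ∀ k < n, 0 < lam k)
    (hdim : Module.finrank 𝕜 V = ∑ k ∈ Finset.range n, lam k)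
    (Vsub : ℕ → Submodule 𝕜 V) (hdecomp : IsDecomp n lam Vsub)
    (F : ℕ → ℕ → Submodule 𝕜 V) (hF : ∀ k < n, IsFlagOf (Vsub k) (lam k) (F k)) :
    (∀ j < n, ∀ d ≤ lam j,
      F j d = LSflag n lam Vsub F (pSum lam j + d) ⊓ Vsub j) ∧
    (∀ G : ℕ → ℕ → Submodule 𝕜 V, (∀ k < n, IsFlagOf (Vsub k) (lam k) (G k)) →
      (∀ i, LSflag n lam Vsub F i = LSflag n lam Vsub G i) →
      ∀ k < n, ∀ d ≤ lam k, F k d = G k d) := by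
  constructor
  · exact LS_recover n lam hlam Vsub hdecomp F hF
  · intro G hG hEq k hk d hd
    rw [LS_recover n lam hlam Vsub hdecomp F hF k hk d hd, hEq,
      ← LS_recover n lam hlam Vsub hdecomp G hG k hk d hd]
end
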